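/- arXiv:1006.2926 — 5 statements merged into one kernel-verified Lean document; each statement's English description precedes it below -/
import Mathlib

section
/- Let H = (V, E) be a hypergraph with n vertices, let k ≥ 2 be a fixed integer, let 0 < α ≤ 1 be a fixed real, and let C > 0 be a constant. If every vertex-induced sub-hypergraph H' of H with m vertices admits a k-colorful coloring with at most C·k·m^α colors (i.e., c_{H'}(k) ≤ C·k·m^α), then there exists a constant C' depending only on C and α such that H admits a (k−1)-strong-conflict-free coloring with at most C'·k·n^α colors; that is, f_H(k−1) = O(k·n^α). -/
/-- A coloring `φ` is `k`-colorful for the hyperedge family `E` if every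
hyperedge `e ∈ E` contains `min |e| k` vertices with pairwise distinct colors. -/
def IsColorful {V C : Type} (k : ℕ) (E : Set (Finset V)) (φ : V → C) : Prop :=
  ∀ e ∈ E, ∃ S ⊆ e, S.card = min e.card k ∧ Set.InjOn φ ↑S

/-- A coloring `φ` is `k`-strong-conflict-free for the hyperedge family `E` if every
hyperedge of size at least `k` contains `k` vertices whose colors appear exactly once
in the hyperedge, and every hyperedge of size less than `k` is rainbow. -/
def IsSCF {V C : Type} (k : ℕ) (E : Set (Finset V)) (φ : V → C) : Prop :=
  ∀ e ∈ E,
    (k ≤ e.card → ∃ S ⊆ e, S.card = k ∧ ∀ v ∈ S, ∀ u ∈ e, φ u = φ v → u = v) ∧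
    (e.card < k → Set.InjOn φ ↑e)

/-- Bernoulli-type estimate: for `0 < α ≤ 1`, `(m - d) ^ α ≤ m ^ α - α * (d / m) * m ^ α`. -/
lemma bern_aux {α : ℝ} (hα0 : 0 < α) (hα1 : α ≤ 1) {m d : ℝ} (hm : 0 < m)
    (hd0 : 0 ≤ d) (hdm : d ≤ m) :
    (m - d) ^ α ≤ m ^ α - α * (d / m) * m ^ α := by
  have hmne : m ≠ 0 := hm.ne'
  have h1 : m - d = m * (1 + (-(d / m))) := by field_simp; ring
  have h2 : (0:ℝ) ≤ 1 + (-(d / m)) := by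
    have : d / m ≤ 1 := (div_le_one hm).mpr hdm
    linarith
  have h3 : (m - d) ^ α = m ^ α * (1 + (-(d / m))) ^ α := by
    rw [h1, Real.mul_rpow hm.le h2]
  have h4 : (1 + (-(d / m))) ^ α ≤ 1 + α * (-(d / m)) := by
    apply rpow_one_add_le_one_add_mul_self _ hα0.le hα1
    linarith
  have h5 : (0:ℝ) ≤ m ^ α := Real.rpow_nonneg hm.le α
  calc (m - d) ^ α = m ^ α * (1 + (-(d / m))) ^ α := h3
    _ ≤ m ^ α * (1 + α * (-(d / m))) := by
        exact mul_le_mul_of_nonneg_left h4 h5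
    _ = m ^ α - α * (d / m) * m ^ α := by ring

lemma main_lemma {V : Type} [Fintype V] [DecidableEq V]
    (C α : ℝ) (hC : 0 < C) (hα0 : 0 < α) (hα1 : α ≤ 1)
    (E : Set (Finset V)) (k : ℕ) (hk : 2 ≤ k)
    (hH : ∀ V' : Finset V, ∃ φ : V → ℕ,
      ((V'.image φ).card : ℝ) ≤ C * k * (V'.card : ℝ) ^ α ∧
      IsColorful k {e | ∃ e₀ ∈ E, e = e₀ ∩ V' ∧ e.Nonempty} φ) :
    ∀ (n : ℕ) (V' : Finset V), V'.card ≤ n →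
      ∃ (T : ℕ) (ψ : V → ℕ),
        (T : ℝ) ≤ C / α * k * (V'.card : ℝ) ^ α ∧
        (∀ v ∈ V', ψ v < T) ∧
        (∀ e₀ ∈ E, ∃ S ⊆ e₀ ∩ V', S.card = min (e₀ ∩ V').card (k - 1) ∧
          ∀ v ∈ S, ∀ u ∈ e₀ ∩ V', ψ u = ψ v → u = v) ∧
        (∀ e₀ ∈ E, (e₀ ∩ V').card ≤ k → Set.InjOn ψ ↑(e₀ ∩ V')) := by
  intro n
  induction n with
  | zero =>
    intro V' hV'
    have hV'e : V' = ∅ := Finset.card_eq_zero.mp (Nat.le_zero.mp hV')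
    subst hV'e
    refine ⟨0, fun _ => 0, ?_, by simp, ?_, ?_⟩
    · simp [Real.zero_rpow hα0.ne']
    · intro e₀ _
      exact ⟨∅, by simp, by simp, by simp⟩
    · intro e₀ _ _
      simp
  | succ n ih =>
    intro V' hV'
    rcases V'.eq_empty_or_nonempty with rfl | hne
    · refine ⟨0, fun _ => 0, ?_, by simp, ?_, ?_⟩
      · simp [Real.zero_rpow hα0.ne']
      · intro e₀ _
        exact ⟨∅, by simp, by simp, by simp⟩
      · intro e₀ _ _
        simp
    · obtain ⟨φ, hφcard, hφcol⟩ := hH V'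
      have hIne : (V'.image φ).Nonempty := hne.image φ
      obtain ⟨c, hcI, hcmax⟩ :=
        Finset.exists_max_image (V'.image φ) (fun c => (V'.filter (fun v => φ v = c)).card) hIne
      set M := V'.filter (fun v => φ v = c) with hMdef
      have hMsub : M ⊆ V' := Finset.filter_subset _ _
      have hMne : M.Nonempty := by
        obtain ⟨v, hv, hvc⟩ := Finset.mem_image.mp hcI
        exact ⟨v, Finset.mem_filter.mpr ⟨hv, hvc⟩⟩
      have hpigeon : V'.card ≤ (V'.image φ).card * M.card := by
        rw [Finset.card_eq_sum_card_fiberwise (fun v hv => Finset.mem_image_of_mem φ hv)]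
        calc ∑ c' ∈ V'.image φ, (V'.filter fun v => φ v = c').card
            ≤ ∑ _c' ∈ V'.image φ, M.card := Finset.sum_le_sum (fun c' hc' => hcmax c' hc')
          _ = (V'.image φ).card * M.card := by rw [Finset.sum_const, smul_eq_mul]
      set V'' := V' \ M with hV''def
      have hV''lt : V''.card < V'.card := Finset.card_lt_card (Finset.sdiff_ssubset hMsub hMne)
      obtain ⟨T, ψ, hT, hA, hCC, hDD⟩ := ih V'' (by omega)
      set ψ' : V → ℕ := fun v => if v ∈ M then T else ψ v with hψ'def
      -- trace identity
      have htrace : ∀ e₀ : Finset V, e₀ ∩ V'' = (e₀ ∩ V') \ M := by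
        intro e₀
        rw [hV''def, Finset.inter_sdiff_assoc]
      -- the injectivity statement for small traces
      have hinj : ∀ e₀ ∈ E, (e₀ ∩ V').card ≤ k → Set.InjOn ψ' ↑(e₀ ∩ V') := by
        intro e₀ he₀ htk
        rcases (e₀ ∩ V').eq_empty_or_nonempty with hte | htne
        · rw [hte]; simp
        · obtain ⟨S₀, hS₀t, hS₀card, hS₀inj⟩ := hφcol (e₀ ∩ V') ⟨e₀, he₀, rfl, htne⟩
          have hS₀eq : S₀ = e₀ ∩ V' := by
            apply Finset.eq_of_subset_of_card_le hS₀t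
            rw [hS₀card, min_eq_left htk]
          have hφinj : Set.InjOn φ ↑(e₀ ∩ V') := hS₀eq ▸ hS₀inj
          intro u hu v hv huv
          have hu' : u ∈ e₀ ∩ V' := Finset.mem_coe.mp hu
          have hv' : v ∈ e₀ ∩ V' := Finset.mem_coe.mp hv
          by_cases huM : u ∈ M <;> by_cases hvM : v ∈ M
          · apply hφinj hu hv
            have h1 : φ u = c := (Finset.mem_filter.mp huM).2
            have h2 : φ v = c := (Finset.mem_filter.mp hvM).2
            rw [h1, h2]
          · exfalso
            have hvV'' : v ∈ V'' := Finset.mem_sdiff.mpr ⟨(Finset.mem_inter.mp hv').2, hvM⟩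
            have := hA v hvV''
            simp only [hψ'def, if_pos huM, if_neg hvM] at huv
            omega
          · exfalso
            have huV'' : u ∈ V'' := Finset.mem_sdiff.mpr ⟨(Finset.mem_inter.mp hu').2, huM⟩
            have := hA u huV''
            simp only [hψ'def, if_neg huM, if_pos hvM] at huv
            omega
          · simp only [hψ'def, if_neg huM, if_neg hvM] at huv
            have hu'' : u ∈ e₀ ∩ V'' := by
              rw [htrace e₀]; exact Finset.mem_sdiff.mpr ⟨hu', huM⟩
            have hv'' : v ∈ e₀ ∩ V'' := by
              rw [htrace e₀]; exact Finset.mem_sdiff.mpr ⟨hv', hvM⟩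
            have hcard'' : (e₀ ∩ V'').card ≤ k := by
              refine le_trans (Finset.card_le_card ?_) htk
              rw [htrace e₀]; exact Finset.sdiff_subset
            exact hDD e₀ he₀ hcard'' (Finset.mem_coe.mpr hu'') (Finset.mem_coe.mpr hv'') huv
      refine ⟨T + 1, ψ', ?_, ?_, ?_, ?_⟩
      -- color count
      · have hm1 : (1:ℝ) ≤ (V'.card : ℝ) := by exact_mod_cast hne.card_pos
        have hm0 : (0:ℝ) < (V'.card : ℝ) := by linarith
        have hk0 : (0:ℝ) < (k : ℝ) := by positivity
        have hcard1 : (1:ℝ) ≤ ((V'.image φ).card : ℝ) := by exact_mod_cast hIne.card_pos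
        have hCk1 : (1:ℝ) ≤ C * k * (V'.card : ℝ) ^ α := le_trans hcard1 hφcard
        have hCkpos : (0:ℝ) < C * k * (V'.card : ℝ) ^ α := by linarith
        set m : ℝ := (V'.card : ℝ) with hmdef
        set d : ℝ := m / (C * k * m ^ α) with hddef
        have hd0 : 0 ≤ d := by positivity
        have hdm : d ≤ m := div_le_self hm0.le hCk1
        have hIpos : (0:ℝ) < ((V'.image φ).card : ℝ) := by linarith
        have hM_lb : d ≤ (M.card : ℝ) := by
          have h1 : m / (C * k * m ^ α) ≤ m / ((V'.image φ).card : ℝ) := by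
            apply div_le_div_of_nonneg_left hm0.le hIpos hφcard
          have h2 : m / ((V'.image φ).card : ℝ) ≤ (M.card : ℝ) := by
            rw [div_le_iff₀ hIpos]
            have := hpigeon
            have hcast : (V'.card : ℝ) ≤ ((V'.image φ).card : ℝ) * (M.card : ℝ) := by
              exact_mod_cast this
            linarith [hcast]
          exact le_trans h1 h2
        have hm'' : (V''.card : ℝ) ≤ m - d := by
          have hceq : (V''.card : ℝ) = m - (M.card : ℝ) := by
            rw [hV''def, Finset.card_sdiff_of_subset hMsub,
              Nat.cast_sub (Finset.card_le_card hMsub)]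
          rw [hceq]
          linarith
        have hstep : ((V''.card : ℝ)) ^ α ≤ m ^ α - α * (d / m) * m ^ α := by
          refine le_trans (Real.rpow_le_rpow (by positivity) hm'' hα0.le) ?_
          exact bern_aux hα0 hα1 hm0 hd0 hdm
        have hdfm : α * (d / m) * m ^ α = α / (C * k) := by
          rw [hddef]
          have hmne : m ≠ 0 := hm0.ne'
          have hrne : m ^ α ≠ 0 := (Real.rpow_pos_of_pos hm0 α).ne'
          field_simp
        rw [hdfm] at hstep
        have hfac : (0:ℝ) < C / α * k := by positivity
        have hmul : C / α * k * ((V''.card : ℝ)) ^ α ≤ C / α * k * (m ^ α - α / (C * k)) :=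
          mul_le_mul_of_nonneg_left hstep hfac.le
        have hone : C / α * k * (α / (C * k)) = 1 := by
          field_simp
        push_cast
        have : (T : ℝ) ≤ C / α * k * ((V''.card : ℝ)) ^ α := hT
        nlinarith [hmul, hone, this]
      -- colors in range
      · intro v hv
        by_cases hvM : v ∈ M
        · simp only [hψ'def, if_pos hvM]; omega
        · have hvV'' : v ∈ V'' := Finset.mem_sdiff.mpr ⟨hv, hvM⟩
          have := hA v hvV''
          simp only [hψ'def, if_neg hvM]; omega
      -- SCF property
      · intro e₀ he₀
        by_cases htk : (e₀ ∩ V').card ≤ k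
        · obtain ⟨S, hSsub, hScard⟩ :=
            Finset.exists_subset_card_eq (min_le_left (e₀ ∩ V').card (k - 1))
          refine ⟨S, hSsub, hScard, ?_⟩
          intro v hvS u hut hψeq
          exact hinj e₀ he₀ htk (Finset.mem_coe.mpr hut) (Finset.mem_coe.mpr (hSsub hvS)) hψeq
        · push_neg at htk
          have htne : (e₀ ∩ V').Nonempty := by
            rw [← Finset.card_pos]; omega
          obtain ⟨S₀, hS₀t, hS₀card, hS₀inj⟩ := hφcol (e₀ ∩ V') ⟨e₀, he₀, rfl, htne⟩
          have hS₀k : S₀.card = k := by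
            rw [hS₀card, min_eq_right (le_of_lt htk)]
          -- |trace ∩ M ∩ S₀| ≤ 1
          have h1 : ((e₀ ∩ V') ∩ M ∩ S₀).card ≤ 1 := by
            refine Finset.card_le_one.mpr ?_
            intro a ha b hb
            have haS : a ∈ S₀ := (Finset.mem_inter.mp ha).2
            have hbS : b ∈ S₀ := (Finset.mem_inter.mp hb).2
            have haM : a ∈ M := (Finset.mem_inter.mp (Finset.mem_inter.mp ha).1).2
            have hbM : b ∈ M := (Finset.mem_inter.mp (Finset.mem_inter.mp hb).1).2
            apply hS₀inj (Finset.mem_coe.mpr haS) (Finset.mem_coe.mpr hbS)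
            have h1' : φ a = c := (Finset.mem_filter.mp haM).2
            have h2' : φ b = c := (Finset.mem_filter.mp hbM).2
            rw [h1', h2']
          have h2 : (((e₀ ∩ V') ∩ M) \ S₀).card ≤ ((e₀ ∩ V') \ S₀).card :=
            Finset.card_le_card (Finset.sdiff_subset_sdiff Finset.inter_subset_left
              (Finset.Subset.refl _))
          have h3 : ((e₀ ∩ V') \ S₀).card = (e₀ ∩ V').card - S₀.card :=
            Finset.card_sdiff_of_subset hS₀t
          have h4 : ((e₀ ∩ V') ∩ M ∩ S₀).card + (((e₀ ∩ V') ∩ M) \ S₀).card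
              = ((e₀ ∩ V') ∩ M).card := Finset.card_inter_add_card_sdiff _ _
          have h5 : ((e₀ ∩ V') \ M).card + ((e₀ ∩ V') ∩ M).card = (e₀ ∩ V').card :=
            Finset.card_sdiff_add_card_inter _ _
          have hfact2 : k - 1 ≤ (e₀ ∩ V'').card := by
            rw [htrace e₀]
            omega
          obtain ⟨S, hSsub'', hScard'', huniq''⟩ := hCC e₀ he₀
          have hScardk : S.card = k - 1 := by
            rw [hScard'', min_eq_right hfact2]
          have hSsubt : S ⊆ e₀ ∩ V' := by
            refine le_trans hSsub'' ?_
            rw [htrace e₀]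
            exact Finset.sdiff_subset
          refine ⟨S, hSsubt, ?_, ?_⟩
          · rw [hScardk, min_eq_right]
            omega
          · intro v hvS u hut hψeq
            have hv'' : v ∈ e₀ ∩ V'' := hSsub'' hvS
            have hvM : v ∉ M := by
              rw [htrace e₀] at hv''
              exact (Finset.mem_sdiff.mp hv'').2
            have hψv : ψ v < T := hA v (Finset.mem_inter.mp hv'').2
            by_cases huM : u ∈ M
            · exfalso
              simp only [hψ'def, if_pos huM, if_neg hvM] at hψeq
              omega
            · have hu'' : u ∈ e₀ ∩ V'' := by
                rw [htrace e₀]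
                exact Finset.mem_sdiff.mpr ⟨hut, huM⟩
              simp only [hψ'def, if_neg huM, if_neg hvM] at hψeq
              exact huniq'' v hvS u hu'' hψeq
      -- injectivity for small traces
      · exact hinj

theorem stmt1 (C α : ℝ) (hC : 0 < C) (hα0 : 0 < α) (hα1 : α ≤ 1) :
    ∃ C' : ℝ, 0 < C' ∧
      ∀ (V : Type) [Fintype V] [DecidableEq V] (E : Set (Finset V)),
        (∀ e ∈ E, e.Nonempty) → ∀ k : ℕ, 2 ≤ k →
        (∀ V' : Finset V, ∃ φ : V → ℕ,
          ((V'.image φ).card : ℝ) ≤ C * k * (V'.card : ℝ) ^ α ∧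
          IsColorful k {e | ∃ e₀ ∈ E, e = e₀ ∩ V' ∧ e.Nonempty} φ) →
        ∃ φ : V → ℕ, IsSCF (k - 1) E φ ∧
          ((Finset.univ.image φ).card : ℝ) ≤ C' * k * (Fintype.card V : ℝ) ^ α := by
  refine ⟨C / α, by positivity, ?_⟩
  intro V _ _ E _hE k hk hH
  obtain ⟨T, ψ, hT, hA, hCC, hDD⟩ :=
    main_lemma C α hC hα0 hα1 E k hk hH (Fintype.card V) Finset.univ
      (by rw [Finset.card_univ])
  refine ⟨ψ, ?_, ?_⟩
  · intro e he
    have ht : e ∩ Finset.univ = e := Finset.inter_univ e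
    constructor
    · intro hke
      obtain ⟨S, h1, h2, h3⟩ := hCC e he
      rw [ht] at h1 h2 h3
      refine ⟨S, h1, ?_, h3⟩
      rw [h2, min_eq_right hke]
    · intro hlt
      have h := hDD e he (by rw [ht]; omega)
      rwa [ht] at h
  · have himg : Finset.univ.image ψ ⊆ Finset.range T := by
      intro x hx
      obtain ⟨v, hv, rfl⟩ := Finset.mem_image.mp hx
      exact Finset.mem_range.mpr (hA v hv)
    have hle : (Finset.univ.image ψ).card ≤ T := by
      calc (Finset.univ.image ψ).card ≤ (Finset.range T).card := Finset.card_le_card himg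
        _ = T := Finset.card_range T
    calc ((Finset.univ.image ψ).card : ℝ) ≤ (T : ℝ) := by exact_mod_cast hle
      _ ≤ C / α * k * ((Finset.univ : Finset V).card : ℝ) ^ α := hT
      _ = C / α * k * (Fintype.card V : ℝ) ^ α := by rw [Finset.card_univ]
end

section
/- Let k ≥ 1 be an integer, let 0 ≤ α ≤ 1 be a real, and let d > 0 be a constant. Let R be a finite family of n regions (subsets) of ℝ² such that for every subfamily R' ⊆ R with m regions, the graph G_0(R') has at most (d/2)·m^{1+α} edges. Then the graph G_k(R) is (4·d·k·n^α)-degenerate: every vertex-induced subgraph of G_k(R) on m vertices contains a vertex of degree at most 4·d·k·m^α. -/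
/-- The hyperedge of the hypergraph `H(R)` induced by the family of regions `R`
at the point `p`: the set of (indices of) regions containing `p`. -/
def hyperedge {ι X : Type} (R : ι → Set X) (p : X) : Set ι := {i | p ∈ R i}

/-- The graph `G_k(R')` for the subfamily `R' = {R i : i ∈ V}` of the family of
planar regions `R`: two distinct regions `r, s ∈ V` are adjacent iff some point
`p ∈ r ∩ s` is contained in at most `k` regions of `R' \ {r, s}`. -/
def GkOn {ι : Type} (k : ℕ) (R : ι → Set (ℝ × ℝ)) (V : Set ι) : SimpleGraph ι where
  Adj r s := r ≠ s ∧ r ∈ V ∧ s ∈ V ∧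
    ∃ p, p ∈ R r ∧ p ∈ R s ∧ ({t | t ∈ V ∧ t ≠ r ∧ t ≠ s ∧ p ∈ R t}).ncard ≤ k
  symm := ⟨by
    rintro r s ⟨hne, hrV, hsV, p, hr, hs, hcard⟩
    refine ⟨hne.symm, hsV, hrV, p, hs, hr, ?_⟩
    have hset : {t | t ∈ V ∧ t ≠ s ∧ t ≠ r ∧ p ∈ R t}
        = {t | t ∈ V ∧ t ≠ r ∧ t ≠ s ∧ p ∈ R t} := by
      ext t; simp only [Set.mem_setOf_eq]; tauto
    rw [hset]; exact hcard⟩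
  loopless := ⟨by rintro r ⟨hne, -⟩; exact hne rfl⟩

open scoped Classical

-- (X+1)^n ≥ X^(n-1) * (X+n) for n ≥ 1
lemma aux_binom (X : ℕ) : ∀ n, 1 ≤ n → X^(n-1) * (X+n) ≤ (X+1)^n := by
  intro n
  induction n with
  | zero => omega
  | succ n ih =>
    intro _
    rcases Nat.eq_zero_or_pos n with h0 | hn
    · subst h0; simp
    · have h1 := ih hn
      have he : X^n = X^(n-1) * X := by
        conv_lhs => rw [show n = (n-1)+1 by omega]
        ring
      have hstep : X^n * (X + (n+1)) ≤ (X^(n-1) * (X+n)) * (X+1) := by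
        rw [he]
        nlinarith [Nat.zero_le (X^(n-1)), Nat.zero_le (X^(n-1) * n), Nat.one_le_iff_ne_zero.mp hn]
      calc X^(n+1-1) * (X+(n+1)) = X^n * (X+(n+1)) := by norm_num
        _ ≤ (X^(n-1) * (X+n)) * (X+1) := hstep
        _ ≤ (X+1)^n * (X+1) := Nat.mul_le_mul_right _ h1
        _ = (X+1)^(n+1) := by ring

lemma aux_core (X c n : ℕ) (h : c + 1 = X) :
    c^(n+1) * (X + (n+1)) ≤ X^(n+2) := by
  have hX : 1 ≤ X := by omega
  have h1 : c * (X+1) ≤ X * X := by nlinarith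
  have h2 : c^(n+1) * (X+1)^(n+1) ≤ (X*X)^(n+1) := by
    calc c^(n+1) * (X+1)^(n+1) = (c*(X+1))^(n+1) := (mul_pow _ _ _).symm
      _ ≤ (X*X)^(n+1) := Nat.pow_le_pow_left h1 _
  have h3 : X^n * (X+(n+1)) ≤ (X+1)^(n+1) := by
    have := aux_binom X (n+1) (by omega)
    simpa using this
  have h4 : c^(n+1) * (X^n * (X+(n+1))) ≤ X^n * X^(n+2) := by
    calc c^(n+1) * (X^n * (X+(n+1))) ≤ c^(n+1) * (X+1)^(n+1) := Nat.mul_le_mul_left _ h3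
      _ ≤ (X*X)^(n+1) := h2
      _ = X^n * X^(n+2) := by rw [← pow_add, ← pow_two, ← pow_mul]; ring_nf
  have h5 : X^n * (c^(n+1) * (X+(n+1))) ≤ X^n * X^(n+2) := by
    calc X^n * (c^(n+1) * (X+(n+1))) = c^(n+1) * (X^n * (X+(n+1))) := by ring
      _ ≤ X^n * X^(n+2) := h4
  exact Nat.le_of_mul_le_mul_left h5 (pow_pos hX n)

lemma aux_step (k : ℕ) : (k+2)^(k+2) * k^(k+1) ≤ (k+1)^(2*k+3) := by
  have h4 := aux_core ((k+1)^2) (k*(k+2)) k (by ring)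
  -- (k(k+2))^(k+1) * ((k+1)^2 + (k+1)) ≤ ((k+1)^2)^(k+2)
  have h5 : (k+2) * ((k*(k+2))^(k+1) * ((k+1)^2+(k+1)))
      ≤ (k+1) * ((k+1)^2)^(k+1) * ((k+1)^2+(k+1)) := by
    calc (k+2) * ((k*(k+2))^(k+1) * ((k+1)^2+(k+1)))
        ≤ (k+2) * ((k+1)^2)^(k+2) := Nat.mul_le_mul_left _ h4
      _ = (k+1) * ((k+1)^2)^(k+2) + ((k+1)^2)^(k+2) := by ring
      _ = (k+1) * ((k+1)^2)^(k+2) + (k+1)^2 * ((k+1)^2)^(k+1) := by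
            rw [← pow_succ']
      _ = (k+1) * ((k+1)^2)^(k+1) * ((k+1)^2+(k+1)) := by ring
  have h6 : (k+2) * (k*(k+2))^(k+1) ≤ (k+1) * ((k+1)^2)^(k+1) := by
    have := Nat.le_of_mul_le_mul_right
      (by calc (k+2) * (k*(k+2))^(k+1) * ((k+1)^2+(k+1))
            = (k+2) * ((k*(k+2))^(k+1) * ((k+1)^2+(k+1))) := by ring
          _ ≤ (k+1) * ((k+1)^2)^(k+1) * ((k+1)^2+(k+1)) := h5) (by positivity)
    exact this
  calc (k+2)^(k+2) * k^(k+1) = (k+2) * (k*(k+2))^(k+1) := by rw [mul_pow]; ring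
    _ ≤ (k+1) * ((k+1)^2)^(k+1) := h6
    _ = (k+1)^(2*k+3) := by rw [← pow_mul]; ring_nf

lemma aux_four (k : ℕ) (hk : 1 ≤ k) : (k+1)^(k+1) ≤ 4 * k^(k+1) := by
  induction k with
  | zero => omega
  | succ n ih =>
    rcases Nat.eq_zero_or_pos n with h0 | hn
    · subst h0; norm_num
    · have h1 := ih hn
      have h2 := aux_step n
      have h4 : (n+2)^(n+2) * n^(n+1) ≤ (4 * (n+1)^(n+2)) * n^(n+1) := by
        calc (n+2)^(n+2) * n^(n+1) ≤ (n+1)^(2*n+3) := h2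
          _ = (n+1)^(n+2) * (n+1)^(n+1) := by rw [← pow_add]; ring_nf
          _ ≤ (n+1)^(n+2) * (4 * n^(n+1)) := Nat.mul_le_mul_left _ h1
          _ = (4 * (n+1)^(n+2)) * n^(n+1) := by ring
      exact Nat.le_of_mul_le_mul_right h4 (pow_pos hn _)



/-- induced subgraph of `GkOn k R univ` on `V'` -/
def Gr {ι : Type} (k : ℕ) (R : ι → Set (ℝ × ℝ)) (V' : Finset ι) : SimpleGraph ι where
  Adj u v := u ∈ V' ∧ v ∈ V' ∧ (GkOn k R Set.univ).Adj u v
  symm := ⟨fun u v ⟨h1, h2, h3⟩ => ⟨h2, h1, h3.symm⟩⟩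
  loopless := ⟨fun u ⟨_, _, h⟩ => h.ne rfl⟩

lemma sum_pow_powerset {ι : Type} [DecidableEq ι] (k : ℕ) (A : Finset ι) :
    ∑ T ∈ A.powerset, k^(A.card - T.card) = (k+1)^A.card := by
  have h := Finset.prod_add (fun _ : ι => 1) (fun _ : ι => k) A
  simp only [Finset.prod_const, one_pow, one_mul, Finset.prod_const_one] at h
  rw [show (k+1) = (1+k) by ring, h]
  apply Finset.sum_congr rfl
  intro T hT
  rw [Finset.mem_powerset] at hT
  rw [Finset.card_sdiff_of_subset hT]

lemma sum_pow_card_powerset {ι : Type} [DecidableEq ι] (k : ℕ) (A : Finset ι) :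
    ∑ S ∈ A.powerset, k^(A.card - S.card) * S.card = A.card * (k+1)^(A.card - 1) := by
  induction A using Finset.induction_on with
  | empty => simp
  | @insert a A ha ih =>
    rw [Finset.sum_powerset_insert ha]
    have hcard : (insert a A).card = A.card + 1 := Finset.card_insert_of_notMem ha
    have h1 : ∑ S ∈ A.powerset, k^((insert a A).card - S.card) * S.card
        = k * (A.card * (k+1)^(A.card - 1)) := by
      rw [← ih, Finset.mul_sum]
      apply Finset.sum_congr rfl
      intro S hS
      rw [Finset.mem_powerset] at hS
      have : (insert a A).card - S.card = (A.card - S.card) + 1 := by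
        have := Finset.card_le_card hS; omega
      rw [this, pow_succ]; ring
    have h2 : ∑ S ∈ A.powerset, k^((insert a A).card - (insert a S).card) * (insert a S).card
        = (∑ S ∈ A.powerset, k^(A.card - S.card) * S.card)
          + ∑ S ∈ A.powerset, k^(A.card - S.card) := by
      rw [← Finset.sum_add_distrib]
      apply Finset.sum_congr rfl
      intro S hS
      rw [Finset.mem_powerset] at hS
      have haS : a ∉ S := fun h => ha (hS h)
      have hc : (insert a S).card = S.card + 1 := Finset.card_insert_of_notMem haS
      have he : (insert a A).card - (insert a S).card = A.card - S.card := by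
        have := Finset.card_le_card hS; omega
      rw [he, hc]; ring
    rw [h1, h2, ih, sum_pow_powerset, hcard]
    rcases Nat.eq_zero_or_pos A.card with h0 | hpos
    · simp [h0]
    · have : A.card = (A.card - 1) + 1 := by omega
      rw [show A.card + 1 - 1 = A.card by omega]
      calc k * (A.card * (k+1)^(A.card-1)) + (A.card * (k+1)^(A.card-1) + (k+1)^A.card)
          = A.card * ((k+1) * (k+1)^(A.card-1)) + (k+1)^A.card := by ring
        _ = A.card * (k+1)^A.card + (k+1)^A.card := by rw [← pow_succ']; rw [← this]
        _ = (A.card + 1) * (k+1)^A.card := by ring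

lemma per_edge {ι : Type} [Fintype ι] (k : ℕ) (hk : 1 ≤ k)
    (R : ι → Set (ℝ × ℝ)) (V' : Finset ι) {r s : ι}
    (hadj : (Gr k R V').Adj r s) :
    k^k * (k+1)^V'.card ≤ (k+1)^(k+2) *
      ∑ S ∈ V'.powerset, k^(V'.card - S.card)
        * (if (GkOn 0 R ↑S).Adj r s then 1 else 0) := by
  classical
  obtain ⟨hrV, hsV, hne, -, -, p, hpr, hps, hbl⟩ : r ∈ V' ∧ s ∈ V' ∧ r ≠ s ∧ r ∈ Set.univ ∧ s ∈ Set.univ ∧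
      ∃ p, p ∈ R r ∧ p ∈ R s ∧ ({t | t ∈ Set.univ ∧ t ≠ r ∧ t ≠ s ∧ p ∈ R t}).ncard ≤ k := hadj
  set m := V'.card with hmdef
  set W : Finset ι := V'.filter (fun t => t ≠ r ∧ t ≠ s ∧ p ∈ R t) with hWdef
  have hWk : W.card ≤ k := by
    have hsub : (↑W : Set ι) ⊆ {t | t ∈ Set.univ ∧ t ≠ r ∧ t ≠ s ∧ p ∈ R t} := by
      intro t ht
      simp only [hWdef, Finset.coe_filter, Set.mem_setOf_eq] at ht
      simp only [Set.mem_setOf_eq, Set.mem_univ, true_and]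
      exact ht.2
    calc W.card = (↑W : Set ι).ncard := (Set.ncard_coe_finset W).symm
      _ ≤ _ := Set.ncard_le_ncard hsub (Set.toFinite _)
      _ ≤ k := hbl
  have hrW : r ∉ W := by simp [hWdef]
  have hsW : s ∉ W := by simp [hWdef]
  set D : Finset ι := insert r (insert s W) with hDdef
  have hDV : D ⊆ V' := by
    rw [hDdef]
    apply Finset.insert_subset hrV
    exact Finset.insert_subset hsV (Finset.filter_subset _ _)
  have hDcard : D.card = W.card + 2 := by
    rw [hDdef, Finset.card_insert_of_notMem (by simp [hne, hrW]),
      Finset.card_insert_of_notMem hsW]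
  set A : Finset ι := V' \ D with hAdef
  have hAm : A.card + (W.card + 2) = m := by
    rw [← hDcard, hAdef]; exact Finset.card_sdiff_add_card_eq_card hDV
  -- properties of the insert map
  have hins : ∀ T ∈ A.powerset,
      (insert r (insert s T)) ∈ V'.powerset ∧
      (insert r (insert s T)).card = T.card + 2 ∧
      (GkOn 0 R ↑(insert r (insert s T))).Adj r s := by
    intro T hT
    rw [Finset.mem_powerset] at hT
    have hTV : T ⊆ V' := hT.trans (Finset.sdiff_subset)
    have hrT : r ∉ T := fun h => (Finset.mem_sdiff.mp (hT h)).2 (by simp [hDdef])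
    have hsT : s ∉ T := fun h => (Finset.mem_sdiff.mp (hT h)).2 (by simp [hDdef])
    refine ⟨?_, ?_, ?_⟩
    · rw [Finset.mem_powerset]
      exact Finset.insert_subset hrV (Finset.insert_subset hsV hTV)
    · rw [Finset.card_insert_of_notMem (by simp [hne, hrT]),
        Finset.card_insert_of_notMem hsT]
    · refine ⟨hne, by simp, by simp, p, hpr, hps, ?_⟩
      have hempty : {t | t ∈ (↑(insert r (insert s T)) : Set ι) ∧ t ≠ r ∧ t ≠ s ∧ p ∈ R t}
          = ∅ := by
        ext t
        simp only [Set.mem_setOf_eq, Finset.coe_insert, Set.mem_insert_iff,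
          Finset.mem_coe, Set.mem_empty_iff_false, iff_false, not_and]
        rintro (rfl | rfl | htT) htr hts hp
        · exact absurd rfl htr
        · exact absurd rfl hts
        · have htV : t ∈ V' := hTV htT
          have htW : t ∈ W := by
            rw [hWdef, Finset.mem_filter]; exact ⟨htV, htr, hts, hp⟩
          exact (Finset.mem_sdiff.mp (hT htT)).2 (by simp [hDdef, htW])
      rw [hempty]; simp
  have hinj : Set.InjOn (fun T => insert r (insert s T)) (↑A.powerset : Set (Finset ι)) := by
    intro T1 h1 T2 h2 heq
    rw [Finset.mem_coe, Finset.mem_powerset] at h1 h2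
    have key : ∀ T : Finset ι, T ⊆ A → ∀ t, t ∈ T ↔
        (t ∈ insert r (insert s T) ∧ t ≠ r ∧ t ≠ s) := by
      intro T hTA t
      constructor
      · intro ht
        have htA := hTA ht
        have htD := (Finset.mem_sdiff.mp htA).2
        refine ⟨by simp [ht], ?_, ?_⟩
        · rintro rfl; exact htD (by simp [hDdef])
        · rintro rfl; exact htD (by simp [hDdef])
      · rintro ⟨hmem, htr, hts⟩
        rcases Finset.mem_insert.mp hmem with rfl | hmem'
        · exact absurd rfl htr
        · rcases Finset.mem_insert.mp hmem' with rfl | h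
          · exact absurd rfl hts
          · exact h
    have heq' : insert r (insert s T1) = insert r (insert s T2) := heq
    ext t
    rw [key T1 h1 t, key T2 h2 t, heq']
  -- lower bound the sum
  have hmain : k^W.card * (k+1)^A.card ≤
      ∑ S ∈ V'.powerset, k^(m - S.card) * (if (GkOn 0 R ↑S).Adj r s then 1 else 0) := by
    have hLHS : ∑ T ∈ A.powerset, k^(m - (T.card + 2))
        = k^W.card * (k+1)^A.card := by
      rw [← sum_pow_powerset k A, Finset.mul_sum]
      apply Finset.sum_congr rfl
      intro T hT
      rw [Finset.mem_powerset] at hT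
      have hTc := Finset.card_le_card hT
      rw [← pow_add]
      congr 1
      omega
    rw [← hLHS]
    have himage : ∑ T ∈ A.powerset, k^(m - (T.card + 2))
        = ∑ S ∈ A.powerset.image (fun T => insert r (insert s T)),
            k^(m - S.card) * (if (GkOn 0 R ↑S).Adj r s then 1 else 0) := by
      rw [Finset.sum_image (fun T1 h1 T2 h2 h => hinj (by simpa using h1) (by simpa using h2) h)]
      apply Finset.sum_congr rfl
      intro T hT
      obtain ⟨-, hcard, hadj0⟩ := hins T hT
      rw [hcard, if_pos hadj0, mul_one]
    rw [himage]
    apply Finset.sum_le_sum_of_subset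
    intro S hS
    rw [Finset.mem_image] at hS
    obtain ⟨T, hT, rfl⟩ := hS
    exact (hins T hT).1
  -- combine with exponent arithmetic
  have hj := hWk
  calc k^k * (k+1)^m = k^W.card * (k^(k - W.card) * (k+1)^m) := by
        rw [← mul_assoc, ← pow_add]
        congr 2
        omega
    _ ≤ k^W.card * ((k+1)^(k - W.card) * (k+1)^m) := by
        apply Nat.mul_le_mul_left
        apply Nat.mul_le_mul_right
        exact Nat.pow_le_pow_left (by omega) _
    _ = (k+1)^(k+2) * (k^W.card * (k+1)^A.card) := by
        rw [← pow_add]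
        have : k - W.card + m = (k+2) + A.card := by omega
        rw [this, pow_add]
        ring
    _ ≤ (k+1)^(k+2) * ∑ S ∈ V'.powerset, k^(m - S.card)
          * (if (GkOn 0 R ↑S).Adj r s then 1 else 0) :=
        Nat.mul_le_mul_left _ hmain

lemma edge_total {ι : Type} [Fintype ι] (k : ℕ) (hk : 1 ≤ k)
    (R : ι → Set (ℝ × ℝ)) (V' : Finset ι) :
    (Gr k R V').edgeFinset.card * (k^k * (k+1)^V'.card) ≤
      (k+1)^(k+2) * ∑ S ∈ V'.powerset,
        k^(V'.card - S.card) * ((GkOn 0 R ↑S).edgeSet.ncard) := by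
  classical
  set m := V'.card
  set E' := (Gr k R V').edgeFinset with hE'
  have hper : ∀ e ∈ E', k^k * (k+1)^m ≤ (k+1)^(k+2) *
      ∑ S ∈ V'.powerset, k^(m - S.card)
        * (if e ∈ (GkOn 0 R ↑S).edgeSet then 1 else 0) := by
    intro e he
    induction e using Sym2.ind with
    | _ r s =>
      rw [SimpleGraph.mem_edgeFinset, SimpleGraph.mem_edgeSet _] at he
      have hrw : ∀ S : Finset ι,
          (if s(r, s) ∈ (GkOn 0 R ↑S).edgeSet then (1:ℕ) else 0)
            = (if (GkOn 0 R ↑S).Adj r s then (1:ℕ) else 0) :=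
        fun S => if_congr (SimpleGraph.mem_edgeSet _) rfl rfl
      simp only [hrw]
      exact per_edge k hk R V' he
  have h1 : E'.card * (k^k * (k+1)^m) ≤
      ∑ e ∈ E', (k+1)^(k+2) * ∑ S ∈ V'.powerset, k^(m - S.card)
        * (if e ∈ (GkOn 0 R ↑S).edgeSet then 1 else 0) := by
    have := Finset.card_nsmul_le_sum E' _ _ hper
    simpa [smul_eq_mul] using this
  have h2 : ∑ e ∈ E', (k+1)^(k+2) * ∑ S ∈ V'.powerset, k^(m - S.card)
        * (if e ∈ (GkOn 0 R ↑S).edgeSet then 1 else 0)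
      = (k+1)^(k+2) * ∑ S ∈ V'.powerset, k^(m - S.card)
        * ∑ e ∈ E', (if e ∈ (GkOn 0 R ↑S).edgeSet then 1 else 0) := by
    rw [← Finset.mul_sum, Finset.sum_comm]
    congr 1
    apply Finset.sum_congr rfl
    intro S _
    rw [Finset.mul_sum]
  have h3 : ∀ S ∈ V'.powerset,
      (∑ e ∈ E', if e ∈ (GkOn 0 R ↑S).edgeSet then 1 else 0)
        ≤ (GkOn 0 R ↑S).edgeSet.ncard := by
    intro S _
    rw [Finset.sum_boole]
    push_cast
    have hsub : ↑(E'.filter (fun e => e ∈ (GkOn 0 R ↑S).edgeSet))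
        ⊆ (GkOn 0 R ↑S).edgeSet := by
      intro e he
      simp only [Finset.coe_filter, Set.mem_setOf_eq] at he
      exact he.2
    calc (E'.filter (fun e => e ∈ (GkOn 0 R ↑S).edgeSet)).card
        = (↑(E'.filter (fun e => e ∈ (GkOn 0 R ↑S).edgeSet)) : Set (Sym2 ι)).ncard :=
          (Set.ncard_coe_finset _).symm
      _ ≤ _ := Set.ncard_le_ncard hsub (Set.toFinite _)
  calc E'.card * (k^k * (k+1)^m) ≤ _ := h1
    _ = _ := h2
    _ ≤ (k+1)^(k+2) * ∑ S ∈ V'.powerset, k^(m - S.card) * ((GkOn 0 R ↑S).edgeSet.ncard) := by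
        apply Nat.mul_le_mul_left
        apply Finset.sum_le_sum
        intro S hS
        exact Nat.mul_le_mul_left _ (h3 S hS)


theorem stmt3 {ι : Type} [Fintype ι] (k : ℕ) (hk : 1 ≤ k) (α d : ℝ)
    (hα0 : 0 ≤ α) (hα1 : α ≤ 1) (hd : 0 < d) (R : ι → Set (ℝ × ℝ))
    (hedges : ∀ V' : Finset ι,
      (((GkOn 0 R ↑V').edgeSet).ncard : ℝ) ≤ (d / 2) * (V'.card : ℝ) ^ (1 + α)) :
    ∀ V' : Finset ι, V'.Nonempty → ∃ v ∈ V',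
      (({u | u ∈ V' ∧ (GkOn k R Set.univ).Adj v u}).ncard : ℝ)
        ≤ 4 * d * k * (V'.card : ℝ) ^ α := by
  classical
  intro V' hV'
  by_contra hcon
  push_neg at hcon
  set m := V'.card with hm
  have hm1 : 1 ≤ m := Finset.card_pos.mpr hV'
  set G' := Gr k R V' with hG'
  -- degrees
  have hdeg : ∀ v ∈ V',
      ({u | u ∈ V' ∧ (GkOn k R Set.univ).Adj v u}).ncard = G'.degree v := by
    intro v hv
    have hset : {u | u ∈ V' ∧ (GkOn k R Set.univ).Adj v u} = G'.neighborSet v := by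
      ext u
      simp only [Set.mem_setOf_eq, SimpleGraph.mem_neighborSet]
      constructor
      · rintro ⟨h1, h2⟩; exact show v ∈ V' ∧ u ∈ V' ∧ (GkOn k R Set.univ).Adj v u from ⟨hv, h1, h2⟩
      · rintro (⟨_, h1, h2⟩ : v ∈ V' ∧ u ∈ V' ∧ (GkOn k R Set.univ).Adj v u); exact ⟨h1, h2⟩
    rw [hset]
    simp [SimpleGraph.degree, SimpleGraph.neighborFinset, Set.ncard_eq_toFinset_card']
  have hdeg0 : ∀ v, v ∉ V' → G'.degree v = 0 := by
    intro v hv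
    rw [← SimpleGraph.card_neighborFinset_eq_degree]
    apply Finset.card_eq_zero.mpr
    rw [Finset.eq_empty_iff_forall_notMem]
    intro u hu
    rw [SimpleGraph.mem_neighborFinset] at hu
    exact hv (show v ∈ V' ∧ u ∈ V' ∧ (GkOn k R Set.univ).Adj v u from hu).1
  have hhand : ∑ v ∈ V', G'.degree v = 2 * G'.edgeFinset.card :=
    (Finset.sum_subset (Finset.subset_univ V') (fun v _ hv => hdeg0 v hv)).trans
      (SimpleGraph.sum_degrees_eq_twice_card_edges G')
  -- real edge bound
  have hN := edge_total k hk R V'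
  have hNR : (G'.edgeFinset.card : ℝ) * ((k:ℝ)^k * ((k:ℝ)+1)^m) ≤
      ((k:ℝ)+1)^(k+2) * ∑ S ∈ V'.powerset,
        (k:ℝ)^(m - S.card) * (((GkOn 0 R ↑S).edgeSet.ncard : ℕ) : ℝ) := by
    exact_mod_cast hN
  -- bound the weighted sum
  have hFR : ∑ S ∈ V'.powerset,
        (k:ℝ)^(m - S.card) * (((GkOn 0 R ↑S).edgeSet.ncard : ℕ) : ℝ)
      ≤ (d/2) * (m:ℝ)^α * ((m * (k+1)^(m-1) : ℕ) : ℝ) := by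
    have hstep : ∀ S ∈ V'.powerset,
        (k:ℝ)^(m - S.card) * (((GkOn 0 R ↑S).edgeSet.ncard : ℕ) : ℝ)
          ≤ (d/2) * (m:ℝ)^α * ((k^(m - S.card) * S.card : ℕ) : ℝ) := by
      intro S hS
      rw [Finset.mem_powerset] at hS
      have hcard : (S.card : ℝ) ≤ (m : ℝ) := by
        exact_mod_cast Finset.card_le_card hS
      have hrpow : ((S.card : ℝ)) ^ (1+α) ≤ (S.card : ℝ) * (m:ℝ)^α := by
        rcases Nat.eq_zero_or_pos S.card with h0 | hpos
        · rw [h0]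
          push_cast
          rw [Real.zero_rpow (by positivity)]
          positivity
        · have hp : (0:ℝ) < S.card := by exact_mod_cast hpos
          rw [Real.rpow_add hp, Real.rpow_one]
          have : (S.card:ℝ)^α ≤ (m:ℝ)^α :=
            Real.rpow_le_rpow (le_of_lt hp) hcard hα0
          nlinarith
      have h1 : (((GkOn 0 R ↑S).edgeSet.ncard : ℕ) : ℝ) ≤ (d/2) * (S.card:ℝ) * (m:ℝ)^α := by
        calc (((GkOn 0 R ↑S).edgeSet.ncard : ℕ) : ℝ)
            ≤ (d/2) * ((S.card:ℝ))^(1+α) := hedges S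
          _ ≤ (d/2) * ((S.card : ℝ) * (m:ℝ)^α) := by
              apply mul_le_mul_of_nonneg_left hrpow (by positivity)
          _ = (d/2) * (S.card:ℝ) * (m:ℝ)^α := by ring
      calc (k:ℝ)^(m - S.card) * (((GkOn 0 R ↑S).edgeSet.ncard : ℕ) : ℝ)
          ≤ (k:ℝ)^(m - S.card) * ((d/2) * (S.card:ℝ) * (m:ℝ)^α) := by
            apply mul_le_mul_of_nonneg_left h1 (by positivity)
        _ = (d/2) * (m:ℝ)^α * ((k^(m - S.card) * S.card : ℕ) : ℝ) := by
            push_cast; ring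
    calc ∑ S ∈ V'.powerset, (k:ℝ)^(m - S.card) * (((GkOn 0 R ↑S).edgeSet.ncard : ℕ) : ℝ)
        ≤ ∑ S ∈ V'.powerset, (d/2) * (m:ℝ)^α * ((k^(m - S.card) * S.card : ℕ) : ℝ) :=
          Finset.sum_le_sum hstep
      _ = (d/2) * (m:ℝ)^α * ((∑ S ∈ V'.powerset, k^(m - S.card) * S.card : ℕ) : ℝ) := by
          rw [← Finset.mul_sum]; push_cast; ring
      _ = (d/2) * (m:ℝ)^α * ((m * (k+1)^(m-1) : ℕ) : ℝ) := by
          rw [sum_pow_card_powerset]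
  -- combine
  have hC : (0:ℝ) < (k:ℝ)^k * ((k:ℝ)+1)^m := by
    have : (1:ℝ) ≤ (k:ℝ) := by exact_mod_cast hk
    positivity
  have h5 : ((k:ℝ)+1)^(k+1) ≤ 4*(k:ℝ)^(k+1) := by
    exact_mod_cast aux_four k hk
  have hpowid : ((k:ℝ)+1)^(k+2) * ((k:ℝ)+1)^(m-1) = ((k:ℝ)+1)^(k+1) * ((k:ℝ)+1)^m := by
    rw [← pow_add, ← pow_add]
    congr 1
    omega
  have hmain : 2*(G'.edgeFinset.card:ℝ) ≤ 4*d*(k:ℝ)*(m:ℝ)^α*(m:ℝ) := by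
    have hchain : 2*(G'.edgeFinset.card:ℝ) * ((k:ℝ)^k * ((k:ℝ)+1)^m)
        ≤ (4*d*(k:ℝ)*(m:ℝ)^α*(m:ℝ)) * ((k:ℝ)^k * ((k:ℝ)+1)^m) := by
      have hR1 : ((k:ℝ)+1)^(k+2) * ∑ S ∈ V'.powerset,
            (k:ℝ)^(m - S.card) * (((GkOn 0 R ↑S).edgeSet.ncard : ℕ) : ℝ)
          ≤ ((k:ℝ)+1)^(k+2) * ((d/2) * (m:ℝ)^α * ((m * (k+1)^(m-1) : ℕ) : ℝ)) := by
        apply mul_le_mul_of_nonneg_left hFR (by positivity)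
      have hR2 : ((k:ℝ)+1)^(k+2) * ((d/2) * (m:ℝ)^α * ((m * (k+1)^(m-1) : ℕ) : ℝ))
          = (d/2) * (m:ℝ)^α * (m:ℝ) * (((k:ℝ)+1)^(k+1) * ((k:ℝ)+1)^m) := by
        push_cast
        rw [← hpowid]; ring
      have hR3 : (d/2) * (m:ℝ)^α * (m:ℝ) * (((k:ℝ)+1)^(k+1) * ((k:ℝ)+1)^m)
          ≤ (d/2) * (m:ℝ)^α * (m:ℝ) * ((4*(k:ℝ)^(k+1)) * ((k:ℝ)+1)^m) := by
        apply mul_le_mul_of_nonneg_left _ (by positivity)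
        apply mul_le_mul_of_nonneg_right h5 (by positivity)
      have hR4 : (d/2) * (m:ℝ)^α * (m:ℝ) * ((4*(k:ℝ)^(k+1)) * ((k:ℝ)+1)^m)
          = (2*d*(k:ℝ)*(m:ℝ)^α*(m:ℝ)) * ((k:ℝ)^k * ((k:ℝ)+1)^m) := by
        rw [pow_succ]; ring
      nlinarith [hNR]
    exact le_of_mul_le_mul_right hchain hC
  -- contradiction via handshake
  have heq : ∑ v ∈ V', (({u | u ∈ V' ∧ (GkOn k R Set.univ).Adj v u}).ncard : ℝ)
      = 2*(G'.edgeFinset.card:ℝ) := by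
    have : ∑ v ∈ V', (({u | u ∈ V' ∧ (GkOn k R Set.univ).Adj v u}).ncard : ℝ)
        = ∑ v ∈ V', ((G'.degree v : ℕ) : ℝ) := by
      apply Finset.sum_congr rfl
      intro v hv
      exact_mod_cast hdeg v hv
    rw [this, ← Nat.cast_sum]
    exact_mod_cast hhand
  have hlt : (m:ℝ) * (4*d*(k:ℝ)*(m:ℝ)^α)
      < ∑ v ∈ V', (({u | u ∈ V' ∧ (GkOn k R Set.univ).Adj v u}).ncard : ℝ) := by
    have := Finset.sum_lt_sum_of_nonempty hV' (fun v hv => hcon v hv)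
    simpa [Finset.sum_const, nsmul_eq_mul] using this
  have hcomm : (m:ℝ) * (4*d*(k:ℝ)*(m:ℝ)^α) = 4*d*(k:ℝ)*(m:ℝ)^α*(m:ℝ) := by ring
  linarith
end

section
/- There exists an absolute constant C such that the following holds. Let R be a finite family of n ≥ 2 axis-parallel rectangles in the plane ℝ², let H = H(R) be the hypergraph induced by R, and let k ≥ 2 be an integer. Then every vertex-induced sub-hypergraph H' of H admits a k-colorful coloring with at most C·k·log n colors; that is, c_{H'}(k) = O(k·log n). -/
open scoped Classical

namespace Stmt8Aux
open Finset

variable {ι : Type}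

/-- number of intervals in `F` containing position `t` with priority higher than `i` -/
noncomputable def covN (F : Finset ι) (ρ lo hi : ι → ℕ) (i : ι) (t : ℕ) : ℕ :=
  (F.filter (fun j => ρ i < ρ j ∧ lo j ≤ t ∧ t ≤ hi j)).card

/-- `i` is among the top `k` (by priority `ρ`) members of `F` containing position `t` -/
def topN (F : Finset ι) (ρ lo hi : ι → ℕ) (k : ℕ) (i : ι) (t : ℕ) : Prop :=
  i ∈ F ∧ lo i ≤ t ∧ t ≤ hi i ∧ covN F ρ lo hi i t < k

lemma covN_anti {F : Finset ι} {ρ lo hi : ι → ℕ} {i j : ι} {t : ℕ}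
    (hj : j ∈ F) (hij : ρ i < ρ j) (h1 : lo j ≤ t) (h2 : t ≤ hi j) :
    covN F ρ lo hi j t < covN F ρ lo hi i t := by
  apply Finset.card_lt_card
  constructor
  · intro l hl
    simp only [mem_filter] at hl ⊢
    exact ⟨hl.1, lt_trans hij hl.2.1, hl.2.2⟩
  · intro hsub
    have : j ∈ F.filter (fun l => ρ i < ρ l ∧ lo l ≤ t ∧ t ≤ hi l) := by
      simp only [mem_filter]; exact ⟨hj, hij, h1, h2⟩
    have := hsub this
    simp only [mem_filter] at this
    exact lt_irrefl _ this.2.1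

lemma covN_injOn {F : Finset ι} {ρ lo hi : ι → ℕ} {t : ℕ}
    (hinj : Set.InjOn ρ F) {i j : ι}
    (hi' : i ∈ F) (hj' : j ∈ F) (h1 : lo i ≤ t) (h2 : t ≤ hi i)
    (h3 : lo j ≤ t) (h4 : t ≤ hi j)
    (hc : covN F ρ lo hi i t = covN F ρ lo hi j t) : i = j := by
  by_contra hne
  have hρ : ρ i ≠ ρ j := fun h => hne (hinj hi' hj' h)
  rcases lt_or_gt_of_ne hρ with h | h
  · exact absurd hc (ne_of_gt (by simpa [hc] using covN_anti hj' h h3 h4)).symm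
  · have := covN_anti (ρ := ρ) hi' h h1 h2
    omega

/-- at any position, at most `k` members are in the top `k`. -/
lemma topN_card_le {F : Finset ι} {ρ lo hi : ι → ℕ} {k : ℕ}
    (hinj : Set.InjOn ρ F) (t : ℕ) :
    (F.filter (fun i => topN F ρ lo hi k i t)).card ≤ k := by
  have := Finset.card_le_card_of_injOn (fun i => covN F ρ lo hi i t)
    (s := F.filter (fun i => topN F ρ lo hi k i t)) (t := Finset.range k)
    (fun a ha => by
      simp only [Finset.mem_coe, mem_filter] at ha
      simpa using ha.2.2.2.2)
    (fun a ha b hb hab => by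
      simp only [coe_filter, Set.mem_setOf_eq] at ha hb
      exact covN_injOn hinj ha.2.1 hb.2.1 ha.2.2.1 ha.2.2.2.1 hb.2.2.1 hb.2.2.2.1 hab)
  simpa using this

end Stmt8Aux

namespace Stmt8Aux
open Finset

variable {ι : Type}

/-- the number of members whose coverage drops below `k` at `t` is at most the
number of intervals ending at `t-1`. -/
lemma drop_card_le {F : Finset ι} {ρ lo hi : ι → ℕ} {k : ℕ}
    (hinj : Set.InjOn ρ F) (t : ℕ) :
    (F.filter (fun i => (lo i ≤ t ∧ t ≤ hi i) ∧ covN F ρ lo hi i t < k ∧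
      k ≤ covN F ρ lo hi i (t-1))).card
    ≤ (F.filter (fun j => hi j + 1 = t)).card := by
  set e := (F.filter (fun j => hi j + 1 = t)).card with he
  have key : ∀ i, covN F ρ lo hi i (t-1) ≤ covN F ρ lo hi i t + e := by
    intro i
    have hsub : F.filter (fun j => ρ i < ρ j ∧ lo j ≤ t-1 ∧ t-1 ≤ hi j)
        ⊆ (F.filter (fun j => ρ i < ρ j ∧ lo j ≤ t ∧ t ≤ hi j))
          ∪ (F.filter (fun j => hi j + 1 = t)) := by
      intro j hj
      simp only [mem_filter, mem_union] at hj ⊢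
      by_cases h : t ≤ hi j
      · exact Or.inl ⟨hj.1, hj.2.1, by omega, h⟩
      · exact Or.inr ⟨hj.1, by omega⟩
    calc covN F ρ lo hi i (t-1) ≤ _ := Finset.card_le_card hsub
      _ ≤ _ := Finset.card_union_le _ _
  have := Finset.card_le_card_of_injOn (fun i => covN F ρ lo hi i t)
    (s := F.filter (fun i => (lo i ≤ t ∧ t ≤ hi i) ∧ covN F ρ lo hi i t < k ∧
      k ≤ covN F ρ lo hi i (t-1)))
    (t := Finset.Ico (k - e) k)
    (fun a ha => by
      simp only [Finset.mem_coe, mem_filter] at ha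
      have := key a
      simp only [Finset.mem_coe, Finset.mem_Ico]
      omega)
    (fun a ha b hb hab => by
      simp only [coe_filter, Set.mem_setOf_eq] at ha hb
      exact covN_injOn hinj ha.1 hb.1 ha.2.1.1 ha.2.1.2 hb.2.1.1 hb.2.1.2 hab)
  · calc _ ≤ (Finset.Ico (k-e) k).card := this
      _ ≤ e := by rw [Nat.card_Ico]; omega

end Stmt8Aux

namespace Stmt8Aux
open Finset

variable {ι : Type}

noncomputable def WiSet (F : Finset ι) (ρ lo hi : ι → ℕ) (k : ℕ) (i : ι) : Finset ℕ :=
  (Finset.Icc (lo i) (hi i)).filter (fun t => covN F ρ lo hi i t < k)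

noncomputable def TSet (F : Finset ι) (ρ lo hi : ι → ℕ) (k : ℕ) (i : ι) : Finset ℕ :=
  (WiSet F ρ lo hi k i).filter
    (fun t => t = lo i ∨ (lo i < t ∧ k ≤ covN F ρ lo hi i (t-1)))

lemma comp_min {F : Finset ι} {ρ lo hi : ι → ℕ} {k : ℕ} {i : ι} {t : ℕ}
    (ht : t ∈ WiSet F ρ lo hi k i) :
    ∃ m ∈ TSet F ρ lo hi k i, m ≤ t ∧ Finset.Icc m t ⊆ WiSet F ρ lo hi k i := by
  set S := (WiSet F ρ lo hi k i).filter
    (fun m => m ≤ t ∧ Finset.Icc m t ⊆ WiSet F ρ lo hi k i) with hS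
  have hne : S.Nonempty := ⟨t, by
    simp only [hS, mem_filter]
    refine ⟨ht, le_refl _, ?_⟩
    intro x hx
    simp only [Finset.mem_Icc] at hx
    have : x = t := le_antisymm hx.2 hx.1
    simpa [this] using ht⟩
  set m := S.min' hne with hm
  have hmS : m ∈ S := S.min'_mem hne
  simp only [hS, mem_filter] at hmS
  obtain ⟨hmW, hmt, hIcc⟩ := hmS
  have hmIcc : lo i ≤ m ∧ m ≤ hi i := by
    have := hmW; simp only [WiSet, mem_filter, Finset.mem_Icc] at this; exact this.1
  refine ⟨m, ?_, hmt, hIcc⟩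
  simp only [TSet, mem_filter]
  refine ⟨hmW, ?_⟩
  by_cases hml : m = lo i
  · exact Or.inl hml
  · have hlo : lo i < m := lt_of_le_of_ne hmIcc.1 (Ne.symm hml)
    refine Or.inr ⟨hlo, ?_⟩
    by_contra hcov
    push_neg at hcov
    have hm1W : m - 1 ∈ WiSet F ρ lo hi k i := by
      simp only [WiSet, mem_filter, Finset.mem_Icc]
      exact ⟨⟨by omega, by omega⟩, hcov⟩
    have hm1S : m - 1 ∈ S := by
      simp only [hS, mem_filter]
      refine ⟨hm1W, by omega, ?_⟩
      intro x hx
      simp only [Finset.mem_Icc] at hx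
      by_cases hxm : x < m
      · have : x = m - 1 := by omega
        simpa [this] using hm1W
      · exact hIcc (by simp only [Finset.mem_Icc]; omega)
    have := S.min'_le _ hm1S
    omega

lemma TSet_card_le {F : Finset ι} {ρ lo hi : ι → ℕ} {k : ℕ} {i : ι} :
    (TSet F ρ lo hi k i).card ≤
      1 + ((WiSet F ρ lo hi k i).filter
        (fun t => lo i < t ∧ k ≤ covN F ρ lo hi i (t-1))).card := by
  have : TSet F ρ lo hi k i ⊆ insert (lo i)
      ((WiSet F ρ lo hi k i).filter
        (fun t => lo i < t ∧ k ≤ covN F ρ lo hi i (t-1))) := by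
    intro t htT
    simp only [TSet, mem_filter] at htT
    rcases htT.2 with h | h
    · simp [h]
    · simp only [Finset.mem_insert, mem_filter]
      exact Or.inr ⟨htT.1, h⟩
  calc _ ≤ _ := Finset.card_le_card this
    _ ≤ _ := (Finset.card_insert_le _ _).trans (by omega)

/-- main per-vertex degree bound -/
lemma deg_le {F : Finset ι} {ρ lo hi : ι → ℕ} {k : ℕ} {i : ι} :
    (F.filter (fun j => ρ i < ρ j ∧
        ∃ t, topN F ρ lo hi k i t ∧ topN F ρ lo hi k j t)).card
    ≤ (F.filter (fun j => ρ i < ρ j ∧ lo j ∈ WiSet F ρ lo hi k i)).card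
      + (TSet F ρ lo hi k i).card * k := by
  have hsub : F.filter (fun j => ρ i < ρ j ∧
        ∃ t, topN F ρ lo hi k i t ∧ topN F ρ lo hi k j t)
      ⊆ (F.filter (fun j => ρ i < ρ j ∧ lo j ∈ WiSet F ρ lo hi k i))
        ∪ (TSet F ρ lo hi k i).biUnion
            (fun t => F.filter (fun j => ρ i < ρ j ∧ lo j ≤ t ∧ t ≤ hi j)) := by
    intro j hj
    simp only [mem_filter] at hj
    obtain ⟨hjF, hρ, t, hti, htj⟩ := hj
    have htW : t ∈ WiSet F ρ lo hi k i := by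
      simp only [WiSet, mem_filter, Finset.mem_Icc]
      exact ⟨⟨hti.2.1, hti.2.2.1⟩, hti.2.2.2⟩
    obtain ⟨m, hmT, hmt, hIcc⟩ := comp_min htW
    by_cases hcase : m ≤ lo j
    · apply Finset.mem_union_left
      simp only [mem_filter]
      refine ⟨hjF, hρ, hIcc ?_⟩
      simp only [Finset.mem_Icc]
      exact ⟨hcase, htj.2.1⟩
    · apply Finset.mem_union_right
      simp only [Finset.mem_biUnion]
      refine ⟨m, hmT, ?_⟩
      simp only [mem_filter]
      exact ⟨hjF, hρ, by omega, le_trans hmt htj.2.2.1⟩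
  calc _ ≤ _ := Finset.card_le_card hsub
    _ ≤ _ + ((TSet F ρ lo hi k i).biUnion _).card := Finset.card_union_le _ _
    _ ≤ _ + (TSet F ρ lo hi k i).card * k := by
        gcongr
        apply Finset.card_biUnion_le_card_mul
        intro t htT
        simp only [TSet, WiSet, mem_filter, Finset.mem_Icc] at htT
        exact le_of_lt htT.1.2

end Stmt8Aux

namespace Stmt8Aux
open Finset

variable {ι : Type}

lemma sum_card_filter_comm {α β : Type} {F : Finset α} {T : Finset β} (Q : α → β → Prop) :
    ∑ i ∈ F, (T.filter (fun j => Q i j)).card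
      = ∑ j ∈ T, (F.filter (fun i => Q i j)).card := by
  simp only [Finset.card_filter]
  exact Finset.sum_comm

lemma sum_L_le {F : Finset ι} {ρ lo hi : ι → ℕ} {k : ℕ}
    (hinj : Set.InjOn ρ F) :
    ∑ i ∈ F, (F.filter (fun j => ρ i < ρ j ∧ lo j ∈ WiSet F ρ lo hi k i)).card
      ≤ k * F.card := by
  have comm : ∑ i ∈ F, (F.filter (fun j => ρ i < ρ j ∧ lo j ∈ WiSet F ρ lo hi k i)).card
      = ∑ j ∈ F, (F.filter (fun i => ρ i < ρ j ∧ lo j ∈ WiSet F ρ lo hi k i)).card := by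
    simp only [Finset.card_filter]
    exact Finset.sum_comm
  rw [comm]
  have : ∀ j ∈ F, (F.filter (fun i => ρ i < ρ j ∧ lo j ∈ WiSet F ρ lo hi k i)).card ≤ k := by
    intro j _
    refine le_trans (Finset.card_le_card ?_) (topN_card_le (lo := lo) (hi := hi) hinj (lo j))
    intro i hi'
    simp only [mem_filter, WiSet, Finset.mem_Icc] at hi' ⊢
    exact ⟨hi'.1, hi'.1, hi'.2.2.1.1, hi'.2.2.1.2, hi'.2.2.2⟩
  calc _ ≤ ∑ _j ∈ F, k := Finset.sum_le_sum this
    _ = k * F.card := by rw [Finset.sum_const, smul_eq_mul, mul_comm]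

lemma sum_D_le {F : Finset ι} {ρ lo hi : ι → ℕ} {k : ℕ}
    (hinj : Set.InjOn ρ F) :
    ∑ i ∈ F, ((WiSet F ρ lo hi k i).filter
        (fun t => lo i < t ∧ k ≤ covN F ρ lo hi i (t-1))).card
      ≤ F.card := by
  set T := Finset.range (F.sup hi + 2) with hT
  have hrw : ∀ i ∈ F, (WiSet F ρ lo hi k i).filter
        (fun t => lo i < t ∧ k ≤ covN F ρ lo hi i (t-1))
      = T.filter (fun t => t ∈ WiSet F ρ lo hi k i ∧ lo i < t ∧
          k ≤ covN F ρ lo hi i (t-1)) := by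
    intro i hiF
    ext t
    simp only [mem_filter, hT, Finset.mem_range]
    constructor
    · intro h
      refine ⟨?_, h.1, h.2⟩
      have := h.1
      simp only [WiSet, mem_filter, Finset.mem_Icc] at this
      have := Finset.le_sup (f := hi) hiF
      omega
    · tauto
  rw [Finset.sum_congr rfl (fun i hiF => by rw [hrw i hiF])]
  have comm : ∑ i ∈ F, (T.filter (fun t => t ∈ WiSet F ρ lo hi k i ∧ lo i < t ∧
        k ≤ covN F ρ lo hi i (t-1))).card
      = ∑ t ∈ T, (F.filter (fun i => t ∈ WiSet F ρ lo hi k i ∧ lo i < t ∧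
        k ≤ covN F ρ lo hi i (t-1))).card := by
    simp only [Finset.card_filter]
    exact Finset.sum_comm
  rw [comm]
  have hstep : ∀ t ∈ T, (F.filter (fun i => t ∈ WiSet F ρ lo hi k i ∧ lo i < t ∧
      k ≤ covN F ρ lo hi i (t-1))).card
      ≤ (F.filter (fun j => hi j + 1 = t)).card := by
    intro t _
    refine le_trans (Finset.card_le_card ?_) (drop_card_le (lo := lo) (k := k) hinj t)
    intro i hi'
    simp only [mem_filter, WiSet, Finset.mem_Icc] at hi' ⊢
    exact ⟨hi'.1, ⟨hi'.2.1.1.1, hi'.2.1.1.2⟩, hi'.2.1.2, hi'.2.2.2⟩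
  calc _ ≤ ∑ t ∈ T, (F.filter (fun j => hi j + 1 = t)).card := Finset.sum_le_sum hstep
    _ = F.card := by
        rw [← Finset.card_eq_sum_card_fiberwise (f := fun j => hi j + 1) (s := F) (t := T)]
        intro j hj
        simp only [hT, Finset.mem_coe, Finset.mem_range]
        have := Finset.le_sup (f := hi) hj
        omega

lemma core_one_side {F : Finset ι} {ρ lo hi : ι → ℕ} {k : ℕ}
    (hinj : Set.InjOn ρ F) :
    ∑ i ∈ F, (F.filter (fun j => ρ i < ρ j ∧
        ∃ t, topN F ρ lo hi k i t ∧ topN F ρ lo hi k j t)).card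
      ≤ 3 * k * F.card := by
  calc ∑ i ∈ F, (F.filter (fun j => ρ i < ρ j ∧
        ∃ t, topN F ρ lo hi k i t ∧ topN F ρ lo hi k j t)).card
      ≤ ∑ i ∈ F, ((F.filter (fun j => ρ i < ρ j ∧ lo j ∈ WiSet F ρ lo hi k i)).card
          + (TSet F ρ lo hi k i).card * k) := Finset.sum_le_sum (fun i _ => deg_le)
    _ = ∑ i ∈ F, (F.filter (fun j => ρ i < ρ j ∧ lo j ∈ WiSet F ρ lo hi k i)).card
          + ∑ i ∈ F, (TSet F ρ lo hi k i).card * k := Finset.sum_add_distrib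
    _ ≤ k * F.card + ∑ i ∈ F, (1 + ((WiSet F ρ lo hi k i).filter
          (fun t => lo i < t ∧ k ≤ covN F ρ lo hi i (t-1))).card) * k := by
        gcongr
        · exact sum_L_le hinj
        · exact TSet_card_le
    _ ≤ k * F.card + (F.card + F.card) * k := by
        gcongr
        have := sum_D_le (F := F) (ρ := ρ) (lo := lo) (hi := hi) (k := k) hinj
        calc ∑ i ∈ F, (1 + ((WiSet F ρ lo hi k i).filter
              (fun t => lo i < t ∧ k ≤ covN F ρ lo hi i (t-1))).card) * k
            = (∑ i ∈ F, (1 + ((WiSet F ρ lo hi k i).filter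
              (fun t => lo i < t ∧ k ≤ covN F ρ lo hi i (t-1))).card)) * k :=
              (Finset.sum_mul _ _ _).symm
          _ ≤ (F.card + F.card) * k := by
              apply Nat.mul_le_mul_right
              rw [Finset.sum_add_distrib, Finset.sum_const, smul_eq_mul, mul_one]
              omega
    _ ≤ 3 * k * F.card := by ring_nf; omega

end Stmt8Aux

namespace Stmt8Aux
open Finset

variable {ι : Type}

lemma topN_mono {F G : Finset ι} {ρ lo hi : ι → ℕ} {k : ℕ} {i : ι} {t : ℕ}
    (hGF : G ⊆ F) (hiG : i ∈ G) (h : topN F ρ lo hi k i t) : topN G ρ lo hi k i t := by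
  refine ⟨hiG, h.2.1, h.2.2.1, lt_of_le_of_lt ?_ h.2.2.2⟩
  exact Finset.card_le_card (Finset.filter_subset_filter _ hGF)

/-- the conflict relation within a family `F`, w.r.t. two priority functions -/
def confl (F : Finset ι) (ρB ρA lo hi : ι → ℕ) (k : ℕ) (i j : ι) : Prop :=
  (∃ t, topN F ρB lo hi k i t ∧ topN F ρB lo hi k j t) ∨
  (∃ t, topN F ρA lo hi k i t ∧ topN F ρA lo hi k j t)

lemma confl_symm {F : Finset ι} {ρB ρA lo hi : ι → ℕ} {k : ℕ} {i j : ι}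
    (h : confl F ρB ρA lo hi k i j) : confl F ρB ρA lo hi k j i := by
  rcases h with ⟨t, h1, h2⟩ | ⟨t, h1, h2⟩
  · exact Or.inl ⟨t, h2, h1⟩
  · exact Or.inr ⟨t, h2, h1⟩

lemma one_side_sum (F : Finset ι) (ρ lo hi : ι → ℕ) (k : ℕ)
    (h : Set.InjOn ρ F) :
    ∑ i ∈ F, (F.filter (fun j =>
        (∃ t, topN F ρ lo hi k i t ∧ topN F ρ lo hi k j t) ∧ j ≠ i)).card
      ≤ 6 * k * F.card := by
  have split : ∀ i ∈ F, (F.filter (fun j =>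
        (∃ t, topN F ρ lo hi k i t ∧ topN F ρ lo hi k j t) ∧ j ≠ i)).card
      ≤ (F.filter (fun j => ρ i < ρ j ∧
          ∃ t, topN F ρ lo hi k i t ∧ topN F ρ lo hi k j t)).card
        + (F.filter (fun j => ρ j < ρ i ∧
          ∃ t, topN F ρ lo hi k i t ∧ topN F ρ lo hi k j t)).card := by
    intro i hiF
    refine le_trans (Finset.card_le_card ?_) (Finset.card_union_le _ _)
    intro j hj
    simp only [mem_filter, mem_union] at hj ⊢
    obtain ⟨hjF, hex, hne⟩ := hj
    have hρ : ρ i ≠ ρ j := by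
      intro hh
      exact hne (h hjF hiF hh.symm)
    rcases lt_or_gt_of_ne hρ with hlt | hgt
    · exact Or.inl ⟨hjF, hlt, hex⟩
    · exact Or.inr ⟨hjF, hgt, hex⟩
  calc _ ≤ ∑ i ∈ F, ((F.filter (fun j => ρ i < ρ j ∧
          ∃ t, topN F ρ lo hi k i t ∧ topN F ρ lo hi k j t)).card
        + (F.filter (fun j => ρ j < ρ i ∧
          ∃ t, topN F ρ lo hi k i t ∧ topN F ρ lo hi k j t)).card) :=
        Finset.sum_le_sum split
    _ = ∑ i ∈ F, (F.filter (fun j => ρ i < ρ j ∧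
          ∃ t, topN F ρ lo hi k i t ∧ topN F ρ lo hi k j t)).card
        + ∑ i ∈ F, (F.filter (fun j => ρ j < ρ i ∧
          ∃ t, topN F ρ lo hi k i t ∧ topN F ρ lo hi k j t)).card :=
        Finset.sum_add_distrib
    _ ≤ 3 * k * F.card + 3 * k * F.card := by
        gcongr
        · exact core_one_side h
        · -- swap the roles of i and j
          have comm : ∑ i ∈ F, (F.filter (fun j => ρ j < ρ i ∧
              ∃ t, topN F ρ lo hi k i t ∧ topN F ρ lo hi k j t)).card
              = ∑ j ∈ F, (F.filter (fun i => ρ j < ρ i ∧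
              ∃ t, topN F ρ lo hi k i t ∧ topN F ρ lo hi k j t)).card := by
            simp only [Finset.card_filter]
            exact Finset.sum_comm
          rw [comm]
          have flip : ∀ j ∈ F, (F.filter (fun i => ρ j < ρ i ∧
              ∃ t, topN F ρ lo hi k i t ∧ topN F ρ lo hi k j t)).card
              = (F.filter (fun i => ρ j < ρ i ∧
              ∃ t, topN F ρ lo hi k j t ∧ topN F ρ lo hi k i t)).card := by
            intro j _
            congr 1
            apply Finset.filter_congr
            intro i _
            constructor
            · rintro ⟨h1, t, h2, h3⟩; exact ⟨h1, t, h3, h2⟩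
            · rintro ⟨h1, t, h2, h3⟩; exact ⟨h1, t, h3, h2⟩
          rw [Finset.sum_congr rfl flip]
          exact core_one_side h
    _ = 6 * k * F.card := by ring

lemma confl_sum_le (F : Finset ι) (ρB ρA lo hi : ι → ℕ) (k : ℕ)
    (hB : Set.InjOn ρB F) (hA : Set.InjOn ρA F) :
    ∑ i ∈ F, (F.filter (fun j => j ≠ i ∧ confl F ρB ρA lo hi k i j)).card
      ≤ 12 * k * F.card := by
  have split : ∀ i ∈ F, (F.filter (fun j => j ≠ i ∧ confl F ρB ρA lo hi k i j)).card
      ≤ (F.filter (fun j =>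
          (∃ t, topN F ρB lo hi k i t ∧ topN F ρB lo hi k j t) ∧ j ≠ i)).card
        + (F.filter (fun j =>
          (∃ t, topN F ρA lo hi k i t ∧ topN F ρA lo hi k j t) ∧ j ≠ i)).card := by
    intro i _
    refine le_trans (Finset.card_le_card ?_) (Finset.card_union_le _ _)
    intro j hj
    simp only [mem_filter, mem_union] at hj ⊢
    obtain ⟨hjF, hne, hc⟩ := hj
    rcases hc with hc | hc
    · exact Or.inl ⟨hjF, hc, hne⟩
    · exact Or.inr ⟨hjF, hc, hne⟩
  calc _ ≤ _ := Finset.sum_le_sum split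
    _ = ∑ i ∈ F, (F.filter (fun j =>
          (∃ t, topN F ρB lo hi k i t ∧ topN F ρB lo hi k j t) ∧ j ≠ i)).card
        + ∑ i ∈ F, (F.filter (fun j =>
          (∃ t, topN F ρA lo hi k i t ∧ topN F ρA lo hi k j t) ∧ j ≠ i)).card :=
        Finset.sum_add_distrib
    _ ≤ 6 * k * F.card + 6 * k * F.card := by
        gcongr
        · exact one_side_sum F ρB lo hi k hB
        · exact one_side_sum F ρA lo hi k hA
    _ = 12 * k * F.card := by ring

/-- greedy coloring of a graph from a hereditary low-degree condition. -/
lemma greedy_coloring (r : ι → ι → Prop) (hsym : ∀ i j, r i j → r j i) (d : ℕ) :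
    ∀ (n : ℕ) (V : Finset ι), V.card = n →
    (∀ S ⊆ V, S.Nonempty → ∃ v ∈ S, (S.filter (fun j => j ≠ v ∧ r v j)).card ≤ d) →
    ∃ ψ : ι → ℕ, (∀ i, ψ i < d + 1) ∧
      (∀ i ∈ V, ∀ j ∈ V, j ≠ i → r i j → ψ i ≠ ψ j) := by
  intro n
  induction n using Nat.strong_induction_on with
  | _ n IH =>
    intro V hcard hdeg
    rcases V.eq_empty_or_nonempty with rfl | hne
    · exact ⟨fun _ => 0, fun _ => Nat.succ_pos d, by simp⟩
    · obtain ⟨v, hvV, hvdeg⟩ := hdeg V (subset_refl V) hne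
      set V' := V.erase v with hV'
      have hcard' : V'.card < n := by
        rw [← hcard]; exact Finset.card_erase_lt_of_mem hvV
      obtain ⟨ψ', hψ'b, hψ'c⟩ := IH V'.card hcard' V' rfl
        (fun S hS hSne => hdeg S (hS.trans (Finset.erase_subset _ _)) hSne)
      set used := (V.filter (fun j => j ≠ v ∧ r v j)).image ψ' with hused
      have husedcard : used.card ≤ d := le_trans Finset.card_image_le hvdeg
      have hex : ∃ c ∈ Finset.range (d+1), c ∉ used := by
        apply Finset.not_subset.mp
        intro hsub
        have := Finset.card_le_card hsub
        simp only [Finset.card_range] at this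
        omega
      obtain ⟨c, hcr, hcu⟩ := hex
      refine ⟨fun i => if i = v then c else ψ' i, ?_, ?_⟩
      · intro i
        by_cases h : i = v
        · simpa [h] using Finset.mem_range.mp hcr
        · simp only [h, if_false]; exact hψ'b i
      · intro i hiV j hjV hne' hrij
        simp only []
        by_cases hi : i = v
        · have hjv : j ≠ v := by rw [← hi]; exact hne'
          rw [if_pos hi, if_neg hjv]
          intro heq
          apply hcu
          rw [heq]
          apply Finset.mem_image_of_mem ψ'
          simp only [mem_filter]
          exact ⟨hjV, hjv, by rw [← hi]; exact hrij⟩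
        · by_cases hj : j = v
          · rw [if_neg hi, if_pos hj]
            intro heq
            apply hcu
            rw [← heq]
            apply Finset.mem_image_of_mem ψ'
            simp only [mem_filter]
            refine ⟨hiV, hi, ?_⟩
            have hr : r j i := hsym i j hrij
            rw [hj] at hr
            exact hr
          · rw [if_neg hi, if_neg hj]
            exact hψ'c i (Finset.mem_erase.mpr ⟨hi, hiV⟩) j
              (Finset.mem_erase.mpr ⟨hj, hjV⟩) hne' hrij

end Stmt8Aux

namespace Stmt8Aux
open Finset

variable {ι : Type}

/-- rank of `i` in `V` by value `g` with tie-break `f`. -/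
noncomputable def rnk (V : Finset ι) (g : ι → ℝ) (f : ι → ℕ) (i : ι) : ℕ :=
  (V.filter (fun j => g j < g i ∨ (g j = g i ∧ f j < f i))).card

lemma rnk_lt {V : Finset ι} {g : ι → ℝ} {f : ι → ℕ} {i j : ι}
    (hi : i ∈ V) (hij : g i < g j ∨ (g i = g j ∧ f i < f j)) :
    rnk V g f i < rnk V g f j := by
  apply Finset.card_lt_card
  constructor
  · intro u hu
    simp only [mem_filter] at hu ⊢
    refine ⟨hu.1, ?_⟩
    rcases hu.2 with h | h
    · rcases hij with h' | h'
      · exact Or.inl (h.trans h')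
      · exact Or.inl (by rw [← h'.1]; exact h)
    · rcases hij with h' | h'
      · exact Or.inl (by rw [h.1]; exact h')
      · exact Or.inr ⟨h.1.trans h'.1, h.2.trans h'.2⟩
  · intro hsub
    have hmem : i ∈ V.filter (fun u => g u < g j ∨ (g u = g j ∧ f u < f j)) := by
      simp only [mem_filter]; exact ⟨hi, hij⟩
    have := hsub hmem
    simp only [mem_filter] at this
    rcases this.2 with h | h
    · exact lt_irrefl _ h
    · exact lt_irrefl _ h.2

lemma rnk_injOn {V : Finset ι} {g : ι → ℝ} {f : ι → ℕ}
    (hf : Set.InjOn f V) : Set.InjOn (rnk V g f) V := by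
  intro i hi j hj hij
  by_contra hne
  have hfne : f i ≠ f j := fun h => hne (hf hi hj h)
  have : g i < g j ∨ (g i = g j ∧ f i < f j) ∨ g j < g i ∨ (g j = g i ∧ f j < f i) := by
    rcases lt_trichotomy (g i) (g j) with h | h | h
    · exact Or.inl h
    · rcases lt_or_gt_of_ne hfne with h' | h'
      · exact Or.inr (Or.inl ⟨h, h'⟩)
      · exact Or.inr (Or.inr (Or.inr ⟨h.symm, h'⟩))
    · exact Or.inr (Or.inr (Or.inl h))
  rcases this with h | h | h | h
  · exact absurd hij (ne_of_lt (rnk_lt hi (Or.inl h)))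
  · exact absurd hij (ne_of_lt (rnk_lt hi (Or.inr h)))
  · exact absurd hij.symm (ne_of_lt (rnk_lt hj (Or.inl h)))
  · exact absurd hij.symm (ne_of_lt (rnk_lt hj (Or.inr h)))

/-- larger rank means weakly larger value. -/
lemma rnk_le_val {V : Finset ι} {g : ι → ℝ} {f : ι → ℕ} {i j : ι}
    (hj : j ∈ V) (h : rnk V g f i < rnk V g f j) : g i ≤ g j := by
  by_contra hlt
  push_neg at hlt
  exact absurd h (not_lt_of_ge (le_of_lt (rnk_lt hj (Or.inl hlt))))

/-- out of a finset `A`, at least `min k |A|` elements have fewer than `k`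
elements of higher rank. -/
lemma ranksel : ∀ (n : ℕ) (A : Finset ι) (ρ : ι → ℕ) (k : ℕ), A.card = n →
    Set.InjOn ρ A →
    min k A.card ≤ (A.filter (fun i => (A.filter (fun j => ρ i < ρ j)).card < k)).card := by
  intro n
  induction n using Nat.strong_induction_on with
  | _ n IH =>
    intro A ρ k hA hinj
    rcases A.eq_empty_or_nonempty with rfl | hne
    · simp
    rcases Nat.eq_zero_or_pos k with rfl | hk
    · simp
    obtain ⟨x, hxA, hxmax⟩ := Finset.exists_max_image A ρ hne
    set A' := A.erase x with hA'
    have hA'card : A'.card < n := by rw [← hA]; exact Finset.card_erase_lt_of_mem hxA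
    have hA'c : A'.card = A.card - 1 := by rw [hA']; exact Finset.card_erase_of_mem hxA
    have hinj' : Set.InjOn ρ A' := hinj.mono (by
      intro u hu; exact Finset.mem_of_mem_erase hu)
    have hrank : ∀ i ∈ A', (A.filter (fun j => ρ i < ρ j)).card
        = (A'.filter (fun j => ρ i < ρ j)).card + 1 := by
      intro i hiA'
      have hiA : i ∈ A := Finset.mem_of_mem_erase hiA'
      have hix : i ≠ x := (Finset.mem_erase.mp hiA').1
      have hρx : ρ i < ρ x := by
        rcases lt_or_eq_of_le (hxmax i hiA) with h | h
        · exact h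
        · exact absurd (hinj hiA hxA h) hix
      have : A.filter (fun j => ρ i < ρ j) = insert x (A'.filter (fun j => ρ i < ρ j)) := by
        ext u
        simp only [mem_filter, Finset.mem_insert, hA', Finset.mem_erase]
        constructor
        · rintro ⟨huA, hρu⟩
          by_cases hux : u = x
          · exact Or.inl hux
          · exact Or.inr ⟨⟨hux, huA⟩, hρu⟩
        · rintro (rfl | ⟨⟨_, huA⟩, hρu⟩)
          · exact ⟨hxA, hρx⟩
          · exact ⟨huA, hρu⟩
      rw [this, Finset.card_insert_of_notMem (by
        simp only [mem_filter, hA', Finset.mem_erase]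
        rintro ⟨⟨hxx, _⟩, _⟩
        exact hxx rfl)]
    have hxin : x ∈ A.filter (fun i => (A.filter (fun j => ρ i < ρ j)).card < k) := by
      simp only [mem_filter]
      refine ⟨hxA, ?_⟩
      have : A.filter (fun j => ρ x < ρ j) = ∅ := by
        apply Finset.filter_eq_empty_iff.mpr
        intro j hjA
        exact not_lt_of_ge (hxmax j hjA)
      rw [this]
      simpa using hk
    have hsub : insert x (A'.filter (fun i => (A'.filter (fun j => ρ i < ρ j)).card < k - 1))
        ⊆ A.filter (fun i => (A.filter (fun j => ρ i < ρ j)).card < k) := by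
      intro u hu
      rcases Finset.mem_insert.mp hu with rfl | hu'
      · exact hxin
      · simp only [mem_filter] at hu' ⊢
        refine ⟨Finset.mem_of_mem_erase hu'.1, ?_⟩
        rw [hrank u hu'.1]
        omega
    have hcard := Finset.card_le_card hsub
    rw [Finset.card_insert_of_notMem (by
      simp only [mem_filter, hA', Finset.mem_erase]
      rintro ⟨⟨hxx, _⟩, _⟩
      exact hxx rfl)] at hcard
    have hIH := IH A'.card hA'card A' ρ (k-1) rfl hinj'
    have hApos : 1 ≤ A.card := Finset.card_pos.mpr hne
    rw [hA'c] at hIH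
    omega

end Stmt8Aux

namespace Stmt8Aux
open Finset

/-- integer position of a real number relative to a finite set of reals -/
noncomputable def xiR (xs : Finset ℝ) (x : ℝ) : ℕ :=
  (xs.filter (fun u => u ≤ x)).card + (xs.filter (fun u => u < x)).card

lemma xiR_subset_le {xs : Finset ℝ} {x y : ℝ} (h : x ≤ y) :
    xs.filter (fun u => u ≤ x) ⊆ xs.filter (fun u => u ≤ y) := by
  intro u hu
  simp only [Finset.mem_filter] at hu ⊢
  exact ⟨hu.1, le_trans hu.2 h⟩

lemma xiR_subset_lt {xs : Finset ℝ} {x y : ℝ} (h : x ≤ y) :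
    xs.filter (fun u => u < x) ⊆ xs.filter (fun u => u < y) := by
  intro u hu
  simp only [Finset.mem_filter] at hu ⊢
  exact ⟨hu.1, lt_of_lt_of_le hu.2 h⟩

lemma xiR_mono {xs : Finset ℝ} {x y : ℝ} (h : x ≤ y) : xiR xs x ≤ xiR xs y := by
  unfold xiR
  have h1 := Finset.card_le_card (xiR_subset_le (xs := xs) h)
  have h2 := Finset.card_le_card (xiR_subset_lt (xs := xs) h)
  omega

lemma xiR_strict_right {xs : Finset ℝ} {v x : ℝ} (hv : v ∈ xs) (h : x < v) :
    xiR xs x < xiR xs v := by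
  unfold xiR
  have h1 : (xs.filter (fun u => u ≤ x)).card < (xs.filter (fun u => u ≤ v)).card := by
    apply Finset.card_lt_card
    constructor
    · exact xiR_subset_le h.le
    · intro hsub
      have hm : v ∈ xs.filter (fun u => u ≤ v) := by simp [hv]
      have := hsub hm
      simp only [Finset.mem_filter] at this
      exact absurd this.2 (not_le.mpr h)
  have h2 := Finset.card_le_card (xiR_subset_lt (xs := xs) h.le)
  omega

lemma xiR_strict_left {xs : Finset ℝ} {w x : ℝ} (hw : w ∈ xs) (h : w < x) :
    xiR xs w < xiR xs x := by
  unfold xiR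
  have h1 := Finset.card_le_card (xiR_subset_le (xs := xs) h.le)
  have h2 : (xs.filter (fun u => u < w)).card < (xs.filter (fun u => u < x)).card := by
    apply Finset.card_lt_card
    constructor
    · exact xiR_subset_lt h.le
    · intro hsub
      have hm : w ∈ xs.filter (fun u => u < x) := by simp [hw, h]
      have := hsub hm
      simp only [Finset.mem_filter] at this
      exact absurd this.2 (lt_irrefl w)
  omega

lemma xiR_le {xs : Finset ℝ} {x : ℝ} : xiR xs x ≤ 2 * xs.card := by
  unfold xiR
  have h1 := Finset.card_le_card (Finset.filter_subset (fun u => u ≤ x) xs)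
  have h2 := Finset.card_le_card (Finset.filter_subset (fun u => u < x) xs)
  omega

/-- the containment test transfers to integer positions exactly. -/
lemma xiR_mem_iff {xs : Finset ℝ} {v w x : ℝ} (hv : v ∈ xs) (hw : w ∈ xs) :
    (v ≤ x ∧ x ≤ w) ↔ (xiR xs v ≤ xiR xs x ∧ xiR xs x ≤ xiR xs w) := by
  constructor
  · exact fun h => ⟨xiR_mono h.1, xiR_mono h.2⟩
  · rintro ⟨h1, h2⟩
    constructor
    · by_contra hlt
      push_neg at hlt
      exact absurd h1 (not_le.mpr (xiR_strict_right hv hlt))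
    · by_contra hlt
      push_neg at hlt
      exact absurd h2 (not_le.mpr (xiR_strict_left hw hlt))

end Stmt8Aux

namespace Stmt8Aux
open Finset

/-- there is a multiple of `2^(M-ℓ)` in `[lo,hi]` -/
def levP (M lo hi ℓ : ℕ) : Prop := ∃ s, lo ≤ s ∧ s ≤ hi ∧ 2^(M-ℓ) ∣ s

/-- the level of the interval `[lo,hi]` in the dyadic tree of height `M` -/
noncomputable def levN (M lo hi : ℕ) : ℕ := sInf {ℓ | levP M lo hi ℓ}

/-- the canonical dyadic stabbing point of the interval `[lo,hi]` -/
noncomputable def stabN (M lo hi : ℕ) : ℕ :=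
  sInf {s | lo ≤ s ∧ s ≤ hi ∧ 2^(M - levN M lo hi) ∣ s}

lemma levP_M {M lo hi : ℕ} (hle : lo ≤ hi) : levP M lo hi M :=
  ⟨lo, le_refl _, hle, by simp⟩

lemma levN_le {M lo hi : ℕ} (hle : lo ≤ hi) : levN M lo hi ≤ M :=
  Nat.sInf_le (levP_M hle)

lemma levN_mem {M lo hi : ℕ} (hle : lo ≤ hi) : levP M lo hi (levN M lo hi) :=
  Nat.sInf_mem (⟨M, levP_M hle⟩ : {ℓ | levP M lo hi ℓ}.Nonempty)

lemma stabN_spec {M lo hi : ℕ} (hle : lo ≤ hi) :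
    lo ≤ stabN M lo hi ∧ stabN M lo hi ≤ hi ∧ 2^(M - levN M lo hi) ∣ stabN M lo hi := by
  have hne : {s | lo ≤ s ∧ s ≤ hi ∧ 2^(M - levN M lo hi) ∣ s}.Nonempty := levN_mem hle
  exact Nat.sInf_mem hne

lemma levN_min {M lo hi ℓ : ℕ} (h : ℓ < levN M lo hi) : ¬ levP M lo hi ℓ :=
  Nat.notMem_of_lt_sInf h

/-- auxiliary asymmetric version of the stab-uniqueness lemma -/
lemma stab_eq_aux {M lo1 hi1 lo2 hi2 x : ℕ} (h1 : lo1 ≤ hi1) (h2 : lo2 ≤ hi2)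
    (hb1 : hi1 < 2^M) (hb2 : hi2 < 2^M)
    (hx1 : lo1 ≤ x) (hx1' : x ≤ hi1) (hx2 : lo2 ≤ x) (hx2' : x ≤ hi2)
    (hlev : levN M lo1 hi1 = levN M lo2 hi2)
    (hlt : stabN M lo1 hi1 < stabN M lo2 hi2) : False := by
  obtain ⟨hs1a, hs1b, hs1d⟩ := stabN_spec (M := M) h1
  obtain ⟨hs2a, hs2b, hs2d⟩ := stabN_spec (M := M) h2
  rw [← hlev] at hs2d
  have hℓM : levN M lo1 hi1 ≤ M := levN_le h1
  rcases Nat.eq_zero_or_pos (levN M lo1 hi1) with hℓ0 | hℓpos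
  · rw [hℓ0, Nat.sub_zero] at hs1d hs2d
    have hz1 : stabN M lo1 hi1 = 0 := by
      by_contra hne
      have := Nat.le_of_dvd (Nat.pos_of_ne_zero hne) hs1d
      omega
    have hz2 : stabN M lo2 hi2 = 0 := by
      by_contra hne
      have := Nat.le_of_dvd (Nat.pos_of_ne_zero hne) hs2d
      omega
    omega
  · have hgpos : 0 < 2^(M - levN M lo1 hi1) := by positivity
    have hgap : stabN M lo1 hi1 + 2^(M - levN M lo1 hi1) ≤ stabN M lo2 hi2 := by
      have hdvd : 2^(M - levN M lo1 hi1) ∣ stabN M lo2 hi2 - stabN M lo1 hi1 :=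
        Nat.dvd_sub hs2d hs1d
      have hpos : 0 < stabN M lo2 hi2 - stabN M lo1 hi1 := by omega
      have := Nat.le_of_dvd hpos hdvd
      omega
    obtain ⟨q, hq⟩ := hs1d
    set z := if 2*2^(M - levN M lo1 hi1) ∣ stabN M lo1 hi1 then stabN M lo1 hi1
      else stabN M lo1 hi1 + 2^(M - levN M lo1 hi1) with hz
    have hz1 : stabN M lo1 hi1 ≤ z := by
      rw [hz]; split <;> omega
    have hz2 : z ≤ stabN M lo2 hi2 := by
      rw [hz]; split <;> omega
    have hzd : 2*2^(M - levN M lo1 hi1) ∣ z := by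
      rw [hz]
      split
      · assumption
      · rename_i hnd
        rcases Nat.even_or_odd q with ⟨r, hr⟩ | ⟨r, hr⟩
        · exfalso
          apply hnd
          exact ⟨r, by rw [hq, hr]; ring⟩
        · exact ⟨r+1, by rw [hq, hr]; ring⟩
    have hpow : 2*2^(M - levN M lo1 hi1) = 2^(M - (levN M lo1 hi1 - 1)) := by
      have heq : M - (levN M lo1 hi1 - 1) = (M - levN M lo1 hi1) + 1 := by omega
      rw [heq, pow_succ]
      ring
    rcases le_or_gt x z with hxz | hxz
    · have hP : levP M lo2 hi2 (levN M lo1 hi1 - 1) := by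
        refine ⟨z, le_trans hx2 hxz, le_trans hz2 hs2b, ?_⟩
        rw [← hpow]; exact hzd
      have hle' : levN M lo2 hi2 ≤ levN M lo1 hi1 - 1 := Nat.sInf_le hP
      omega
    · have hP : levP M lo1 hi1 (levN M lo1 hi1 - 1) := by
        refine ⟨z, le_trans hs1a hz1, le_trans hxz.le hx1', ?_⟩
        rw [← hpow]; exact hzd
      have hle' : levN M lo1 hi1 ≤ levN M lo1 hi1 - 1 := Nat.sInf_le hP
      omega

lemma stab_eq {M lo1 hi1 lo2 hi2 x : ℕ} (h1 : lo1 ≤ hi1) (h2 : lo2 ≤ hi2)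
    (hb1 : hi1 < 2^M) (hb2 : hi2 < 2^M)
    (hx1 : lo1 ≤ x) (hx1' : x ≤ hi1) (hx2 : lo2 ≤ x) (hx2' : x ≤ hi2)
    (hlev : levN M lo1 hi1 = levN M lo2 hi2) :
    stabN M lo1 hi1 = stabN M lo2 hi2 := by
  rcases lt_trichotomy (stabN M lo1 hi1) (stabN M lo2 hi2) with h | h | h
  · exact absurd h (fun h => stab_eq_aux h1 h2 hb1 hb2 hx1 hx1' hx2 hx2' hlev h)
  · exact h
  · exact absurd h (fun h =>
      stab_eq_aux h2 h1 hb2 hb1 hx2 hx2' hx1 hx1' hlev.symm h)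

end Stmt8Aux

namespace Stmt8Aux
open Finset

variable {ι : Type}

lemma confl_mono {F G : Finset ι} {ρB ρA lo hi : ι → ℕ} {k : ℕ} {i j : ι}
    (hGF : G ⊆ F) (hi' : i ∈ G) (hj' : j ∈ G) (h : confl F ρB ρA lo hi k i j) :
    confl G ρB ρA lo hi k i j := by
  rcases h with ⟨t, h1, h2⟩ | ⟨t, h1, h2⟩
  · exact Or.inl ⟨t, topN_mono hGF hi' h1, topN_mono hGF hj' h2⟩
  · exact Or.inr ⟨t, topN_mono hGF hi' h1, topN_mono hGF hj' h2⟩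

lemma exists_small_deg {S : Finset ι} (hne : S.Nonempty) (g : ι → ℕ) (d : ℕ)
    (h : ∑ i ∈ S, g i ≤ d * S.card) : ∃ v ∈ S, g v ≤ d := by
  by_contra hc
  push_neg at hc
  have h1 : ∑ _i ∈ S, (d+1) ≤ ∑ i ∈ S, g i :=
    Finset.sum_le_sum (fun i hi => hc i hi)
  rw [Finset.sum_const, smul_eq_mul] at h1
  have h2 : S.card * (d+1) ≤ d * S.card := le_trans h1 h
  rw [Nat.mul_succ, Nat.mul_comm] at h2
  have hpos := Finset.card_pos.mpr hne
  omega

end Stmt8Aux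


/-- An axis-parallel (closed) rectangle in the plane. -/
def IsAxisParallelRect (s : Set (ℝ × ℝ)) : Prop :=
  ∃ a b c d : ℝ, a ≤ b ∧ c ≤ d ∧ s = Set.Icc a b ×ˢ Set.Icc c d

theorem stmt8 :
    ∃ C : ℝ, 0 < C ∧
      ∀ (ι : Type) [Fintype ι] (R : ι → Set (ℝ × ℝ)),
        (∀ i, IsAxisParallelRect (R i)) → 2 ≤ Fintype.card ι →
        ∀ (k : ℕ), 2 ≤ k →
          -- every vertex-induced sub-hypergraph `H[V']` of `H(R)` admits a
          -- `k`-colorful coloring with at most `C * k * log n` colors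
          ∀ V' : Finset ι, ∃ φ : ι → ℕ,
            ((V'.image φ).card : ℝ) ≤ C * k * Real.log (Fintype.card ι) ∧
            ∀ p : ℝ × ℝ, ∃ S ⊆ hyperedge R p ∩ ↑V',
              S.ncard = min (hyperedge R p ∩ ↑V').ncard k ∧ Set.InjOn φ S := by
  classical
  refine ⟨200, by norm_num, ?_⟩
  intro ι _ R hrect hn k hk V'
  open Stmt8Aux in
  -- extract rectangle data
  choose a b c d hab hcd hR using hrect
  -- integer coordinates
  set xs : Finset ℝ := V'.image a ∪ V'.image b with hxs
  set ys : Finset ℝ := V'.image c ∪ V'.image d with hys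
  set m := V'.card with hm
  set lo : ι → ℕ := fun i => xiR xs (a i) with hlo
  set hi : ι → ℕ := fun i => xiR xs (b i) with hhi
  set ylo : ι → ℕ := fun i => xiR ys (c i) with hylo
  set yhi : ι → ℕ := fun i => xiR ys (d i) with hyhi
  set M := Nat.log 2 (4*m) + 1 with hM
  -- basic facts
  have hxs_card : xs.card ≤ 2*m := by
    calc xs.card ≤ (V'.image a).card + (V'.image b).card := Finset.card_union_le _ _
      _ ≤ m + m := by
          gcongr <;> exact Finset.card_image_le
      _ = 2*m := by ring
  have hlohi : ∀ i, lo i ≤ hi i := fun i => xiR_mono (hab i)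
  have hhiM : ∀ i, hi i < 2^M := by
    intro i
    have h1 : hi i ≤ 2*xs.card := xiR_le
    have h2 : 4*m < 2^M := by
      rw [hM]
      exact Nat.lt_pow_succ_log_self (by norm_num) (4*m)
    omega
  set lev : ι → ℕ := fun i => levN M (lo i) (hi i) with hlev
  set stb : ι → ℕ := fun i => stabN M (lo i) (hi i) with hstb
  have hlevM : ∀ i, lev i ≤ M := fun i => levN_le (hlohi i)
  -- tie-breaking injection
  obtain ⟨f, hf⟩ : ∃ f : ι → ℕ, Set.InjOn f ↑V' := by
    refine ⟨fun i => if h : i ∈ V' then ((V'.equivFin) ⟨i, h⟩ : Fin V'.card).val else 0, ?_⟩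
    intro u hu v hv huv
    simp only [Finset.mem_coe] at hu hv
    have e1 : (fun i => if h : i ∈ V' then ((V'.equivFin) ⟨i, h⟩ : Fin V'.card).val else 0) u
        = ((V'.equivFin) ⟨u, hu⟩ : Fin V'.card).val := by simp [hu]
    have e2 : (fun i => if h : i ∈ V' then ((V'.equivFin) ⟨i, h⟩ : Fin V'.card).val else 0) v
        = ((V'.equivFin) ⟨v, hv⟩ : Fin V'.card).val := by simp [hv]
    rw [e1, e2] at huv
    have := (V'.equivFin).injective (Fin.val_injective huv)
    exact Subtype.mk_eq_mk.mp this
  -- priority ranks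
  set ρB := rnk V' b f with hρB
  set ρA := rnk V' (fun i => -(a i)) f with hρA
  have hinjB : Set.InjOn ρB ↑V' := rnk_injOn hf
  have hinjA : Set.InjOn ρA ↑V' := rnk_injOn hf
  -- node families and conflict relation
  set nodeF : ι → Finset ι :=
    fun i => V'.filter (fun j => lev j = lev i ∧ stb j = stb i) with hnodeF
  obtain ⟨Rel, hRel⟩ : ∃ r : ι → ι → Prop, r = fun i j =>
      lev i = lev j ∧ stb i = stb j ∧ confl (nodeF i) ρB ρA ylo yhi k i j := ⟨_, rfl⟩
  have hRelSymm : ∀ i j, Rel i j → Rel j i := by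
    intro i j hij
    rw [hRel] at hij ⊢
    obtain ⟨h1, h2, h3⟩ := hij
    have hnode : nodeF j = nodeF i := by
      apply Finset.filter_congr
      intro u _
      rw [h1, h2]
    exact ⟨h1.symm, h2.symm, by rw [hnode]; exact confl_symm h3⟩
  -- hereditary low-degree property
  have hdeg : ∀ S ⊆ V', S.Nonempty →
      ∃ v ∈ S, (S.filter (fun j => j ≠ v ∧ Rel v j)).card ≤ 12*k := by
    intro S hSV hSne
    obtain ⟨i₀, hi₀⟩ := hSne
    set S₀ := S.filter (fun j => lev j = lev i₀ ∧ stb j = stb i₀) with hS₀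
    have hS₀S : S₀ ⊆ S := Finset.filter_subset _ _
    have hS₀V : ↑S₀ ⊆ (↑V' : Set ι) := by
      intro u hu
      exact Finset.mem_coe.mpr (hSV (hS₀S (Finset.mem_coe.mp hu)))
    have hS₀ne : S₀.Nonempty := ⟨i₀, by simp [hS₀, hi₀]⟩
    have hsum := confl_sum_le S₀ ρB ρA ylo yhi k
      (Set.InjOn.mono hS₀V hinjB) (Set.InjOn.mono hS₀V hinjA)
    obtain ⟨v, hvS₀, hvdeg⟩ := exists_small_deg hS₀ne
      (fun i => (S₀.filter (fun j => j ≠ i ∧ confl S₀ ρB ρA ylo yhi k i j)).card)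
      (12*k) hsum
    have hvmem := Finset.mem_filter.mp hvS₀
    refine ⟨v, hvmem.1, ?_⟩
    refine le_trans (Finset.card_le_card ?_) hvdeg
    intro j hj
    simp only [Finset.mem_filter] at hj ⊢
    obtain ⟨hjS, hjne, hjrel⟩ := hj
    rw [hRel] at hjrel
    obtain ⟨h1, h2, h3⟩ := hjrel
    have hjS₀ : j ∈ S₀ := by
      simp only [hS₀, Finset.mem_filter]
      exact ⟨hjS, by rw [← h1]; exact hvmem.2.1, by rw [← h2]; exact hvmem.2.2⟩
    refine ⟨hjS₀, hjne, ?_⟩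
    have hsub : S₀ ⊆ nodeF v := by
      intro u hu
      have humem := Finset.mem_filter.mp hu
      simp only [hnodeF, Finset.mem_filter]
      refine ⟨hSV humem.1, ?_, ?_⟩
      · rw [humem.2.1, hvmem.2.1]
      · rw [humem.2.2, hvmem.2.2]
    exact confl_mono hsub hvS₀ hjS₀ h3
  -- greedy proper coloring
  obtain ⟨ψ, hψb, hψc⟩ := greedy_coloring Rel hRelSymm (12*k) V'.card V' rfl hdeg
  -- the final coloring
  refine ⟨fun i => lev i * (12*k+1) + ψ i, ?_, ?_⟩
  · -- number of colors
    have hcard : (V'.image (fun i => lev i * (12*k+1) + ψ i)).card ≤ (M+1)*(12*k+1) := by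
      have hsub : V'.image (fun i => lev i * (12*k+1) + ψ i)
          ⊆ Finset.range ((M+1)*(12*k+1)) := by
        intro x hx
        simp only [Finset.mem_image] at hx
        obtain ⟨i, hiV, rfl⟩ := hx
        simp only [Finset.mem_range]
        have h1 : lev i ≤ M := hlevM i
        have h2 : ψ i < 12*k+1 := hψb i
        nlinarith
      calc _ ≤ (Finset.range ((M+1)*(12*k+1))).card := Finset.card_le_card hsub
        _ = (M+1)*(12*k+1) := Finset.card_range _
    have hmn : m ≤ Fintype.card ι := by
      rw [hm, ← Finset.card_univ]
      exact Finset.card_le_card (Finset.subset_univ V')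
    set n := Fintype.card ι with hn'
    have hn2 : (2:ℝ) ≤ (n:ℝ) := by exact_mod_cast hn
    have hnpos : (0:ℝ) < (n:ℝ) := by linarith
    have hlogn : Real.log 2 ≤ Real.log n := by
      apply Real.log_le_log (by norm_num) hn2
    have hlog2 : (0.6931471803 : ℝ) < Real.log 2 := Real.log_two_gt_d9
    have hlognpos : (0:ℝ) < Real.log n := by linarith
    -- bound on M
    set L := Nat.log 2 (4*n) with hL
    have hLm : Nat.log 2 (4*m) ≤ L := Nat.log_mono_right (by omega)
    have hpowL : (2:ℕ)^L ≤ 4*n := Nat.pow_log_le_self 2 (by omega)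
    have hlogL : (L:ℝ) * Real.log 2 ≤ Real.log (4*n) := by
      have h1 : Real.log ((2:ℝ)^L) = L * Real.log 2 := Real.log_pow 2 L
      rw [← h1]
      apply Real.log_le_log (by positivity)
      calc ((2:ℝ))^L = (((2:ℕ)^L : ℕ) : ℝ) := by push_cast; ring
        _ ≤ ((4*n : ℕ) : ℝ) := by exact_mod_cast hpowL
        _ = 4*(n:ℝ) := by push_cast; ring
    have hlog4n : Real.log (4*n) = Real.log 4 + Real.log n := by
      rw [Real.log_mul (by norm_num) (by positivity)]
    have hlog4 : Real.log 4 = 2 * Real.log 2 := by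
      rw [show (4:ℝ) = 2^2 by norm_num, Real.log_pow]
      push_cast; ring
    have hLbound : (L:ℝ) * Real.log 2 ≤ 2*Real.log 2 + Real.log n := by
      rw [hlog4n, hlog4] at hlogL; linarith
    have hMbound : ((M:ℝ) + 1) * Real.log 2 ≤ 6 * Real.log n := by
      have hMlev : (M:ℝ) + 1 ≤ (L:ℝ) + 3 := by
        have : M ≤ L + 1 := by rw [hM]; omega
        have := (Nat.cast_le (α := ℝ)).mpr this
        push_cast at this ⊢
        linarith
      have h0 : (0:ℝ) ≤ Real.log 2 := by linarith
      calc ((M:ℝ)+1) * Real.log 2 ≤ ((L:ℝ)+3) * Real.log 2 := by nlinarith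
        _ = (L:ℝ)*Real.log 2 + 3*Real.log 2 := by ring
        _ ≤ 2*Real.log 2 + Real.log n + 3*Real.log 2 := by linarith
        _ = 5*Real.log 2 + Real.log n := by ring
        _ ≤ 6*Real.log n := by linarith
    have hM8 : ((M:ℝ) + 1) ≤ 9 * Real.log n := by nlinarith
    have hk2 : (2:ℝ) ≤ (k:ℝ) := by exact_mod_cast hk
    calc ((V'.image (fun i => lev i * (12*k+1) + ψ i)).card : ℝ)
        ≤ (((M+1)*(12*k+1) : ℕ) : ℝ) := by exact_mod_cast hcard
      _ = ((M:ℝ)+1) * (12*(k:ℝ)+1) := by push_cast; ring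
      _ ≤ (9*Real.log n) * (13*(k:ℝ)) := by nlinarith
      _ ≤ 200 * (k:ℝ) * Real.log n := by nlinarith
  · -- colorfulness
    intro p
    set E := V'.filter (fun i => p ∈ R i) with hE
    have hEset : hyperedge R p ∩ ↑V' = ↑E := by
      ext i
      simp only [hE, hyperedge, Set.mem_inter_iff, Set.mem_setOf_eq, Finset.coe_filter,
        Finset.mem_coe, Set.mem_setOf_eq]
      tauto
    have hEV : E ⊆ V' := Finset.filter_subset _ _
    set xh := xiR xs p.1 with hxh
    set yh := xiR ys p.2 with hyh
    have hmemE : ∀ i ∈ E, a i ≤ p.1 ∧ p.1 ≤ b i ∧ c i ≤ p.2 ∧ p.2 ≤ d i := by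
      intro i hiE
      have h := (Finset.mem_filter.mp hiE).2
      rw [hR i] at h
      simp only [Set.mem_prod, Set.mem_Icc] at h
      exact ⟨h.1.1, h.1.2, h.2.1, h.2.2⟩
    have haxs : ∀ i ∈ V', a i ∈ xs := fun i hiV =>
      Finset.mem_union_left _ (Finset.mem_image_of_mem a hiV)
    have hbxs : ∀ i ∈ V', b i ∈ xs := fun i hiV =>
      Finset.mem_union_right _ (Finset.mem_image_of_mem b hiV)
    have hcys : ∀ i ∈ V', c i ∈ ys := fun i hiV =>
      Finset.mem_union_left _ (Finset.mem_image_of_mem c hiV)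
    have hdys : ∀ i ∈ V', d i ∈ ys := fun i hiV =>
      Finset.mem_union_right _ (Finset.mem_image_of_mem d hiV)
    have hxc : ∀ i ∈ E, lo i ≤ xh ∧ xh ≤ hi i := fun i hiE =>
      ⟨xiR_mono (hmemE i hiE).1, xiR_mono (hmemE i hiE).2.1⟩
    have hyc : ∀ i ∈ E, ylo i ≤ yh ∧ yh ≤ yhi i := fun i hiE =>
      ⟨xiR_mono (hmemE i hiE).2.2.1, xiR_mono (hmemE i hiE).2.2.2⟩
    have hsame : ∀ i ∈ E, ∀ j ∈ E, lev i = lev j → stb i = stb j := by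
      intro i hiE j hjE hl
      exact stab_eq (hlohi i) (hlohi j) (hhiM i) (hhiM j)
        (hxc i hiE).1 (hxc i hiE).2 (hxc j hjE).1 (hxc j hjE).2 hl
    set sel : ι → ι → ℕ := fun i => if stb i ≤ xh then ρB else ρA with hsel
    set S1 := E.filter (fun i =>
      ((E.filter (fun j => lev j = lev i)).filter (fun j => sel i i < sel i j)).card < k)
      with hS1
    have hS1E : S1 ⊆ E := Finset.filter_subset _ _
    -- S1 is large
    have hS1card : min E.card k ≤ S1.card := by
      have hfibE : E.card = ∑ ℓ ∈ E.image lev, (E.filter (fun i => lev i = ℓ)).card :=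
        Finset.card_eq_sum_card_fiberwise (fun i hiE => Finset.mem_image_of_mem lev hiE)
      have hfibS : S1.card = ∑ ℓ ∈ E.image lev, (S1.filter (fun i => lev i = ℓ)).card :=
        Finset.card_eq_sum_card_fiberwise (fun i hiS => Finset.mem_image_of_mem lev (hS1E hiS))
      have hpt : ∀ ℓ ∈ E.image lev,
          min k (E.filter (fun i => lev i = ℓ)).card
            ≤ (S1.filter (fun i => lev i = ℓ)).card := by
        intro ℓ hℓ
        obtain ⟨i₀, hi₀E, hi₀l⟩ := Finset.mem_image.mp hℓ
        set cls := E.filter (fun i => lev i = ℓ) with hcls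
        have hclsE : cls ⊆ E := Finset.filter_subset _ _
        have hstabc : ∀ i ∈ cls, stb i = stb i₀ := by
          intro i hic
          have h := Finset.mem_filter.mp hic
          exact hsame i h.1 i₀ hi₀E (by rw [h.2, hi₀l])
        set ρ0 : ι → ℕ := if stb i₀ ≤ xh then ρB else ρA with hρ0
        have heq : S1.filter (fun i => lev i = ℓ)
            = cls.filter (fun i => (cls.filter (fun j => ρ0 i < ρ0 j)).card < k) := by
          ext i
          simp only [hS1, hcls, Finset.mem_filter]
          constructor
          · rintro ⟨⟨hiE, hrk⟩, hil⟩
            refine ⟨⟨hiE, hil⟩, ?_⟩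
            have h1 : E.filter (fun j => lev j = lev i) = E.filter (fun j => lev j = ℓ) := by
              apply Finset.filter_congr; intro us _; rw [hil]
            have h2 : sel i = ρ0 := by
              simp only [hsel, hρ0]
              rw [hstabc i (Finset.mem_filter.mpr ⟨hiE, hil⟩)]
            rw [← h1, ← h2]
            exact hrk
          · rintro ⟨⟨hiE, hil⟩, hrk⟩
            refine ⟨⟨hiE, ?_⟩, hil⟩
            have h1 : E.filter (fun j => lev j = lev i) = E.filter (fun j => lev j = ℓ) := by
              apply Finset.filter_congr; intro us _; rw [hil]
            have h2 : sel i = ρ0 := by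
              simp only [hsel, hρ0]
              rw [hstabc i (Finset.mem_filter.mpr ⟨hiE, hil⟩)]
            rw [h1, h2]
            exact hrk
        rw [heq]
        have hclsV : ↑cls ⊆ (↑V' : Set ι) := by
          intro us hus
          exact Finset.mem_coe.mpr (hEV (hclsE (Finset.mem_coe.mp hus)))
        have hinj0 : Set.InjOn ρ0 ↑cls := by
          rw [hρ0]; split
          · exact Set.InjOn.mono hclsV hinjB
          · exact Set.InjOn.mono hclsV hinjA
        exact ranksel cls.card cls ρ0 k rfl hinj0
      by_cases hbig : ∃ ℓ ∈ E.image lev, k ≤ (E.filter (fun i => lev i = ℓ)).card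
      · obtain ⟨ℓ0, hℓ0, hkb⟩ := hbig
        have h1 : k ≤ (S1.filter (fun i => lev i = ℓ0)).card := by
          have := hpt ℓ0 hℓ0
          rwa [min_eq_left hkb] at this
        have h2 : (S1.filter (fun i => lev i = ℓ0)).card ≤ S1.card :=
          Finset.card_le_card (Finset.filter_subset _ _)
        have h3 : min E.card k ≤ k := min_le_right _ _
        omega
      · push_neg at hbig
        have hall : ∀ ℓ ∈ E.image lev, (E.filter (fun i => lev i = ℓ)).card
            ≤ (S1.filter (fun i => lev i = ℓ)).card := by
          intro ℓ hℓ
          have h1 := hpt ℓ hℓ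
          have h2 := hbig ℓ hℓ
          rwa [min_eq_right (le_of_lt h2)] at h1
        have h4 : E.card ≤ S1.card := by
          rw [hfibE, hfibS]
          exact Finset.sum_le_sum hall
        have h5 := min_le_left E.card k
        omega
    -- every member of S1 is in the top k of its node at yh
    have hkey : ∀ u ∈ S1, topN (nodeF u) (sel u) ylo yhi k u yh := by
      intro u huS1
      have hu := Finset.mem_filter.mp huS1
      have huE : u ∈ E := hu.1
      have huV : u ∈ V' := hEV huE
      have huNode : u ∈ nodeF u := by
        simp [hnodeF, huV]
      refine ⟨huNode, (hyc u huE).1, (hyc u huE).2, ?_⟩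
      refine lt_of_le_of_lt (Finset.card_le_card ?_) hu.2
      intro j hj
      simp only [hnodeF, Finset.mem_filter] at hj ⊢
      obtain ⟨⟨hjV, hjlev, hjstb⟩, hρ, hy1, hy2⟩ := hj
      have hcyj : c j ≤ p.2 ∧ p.2 ≤ d j :=
        (xiR_mem_iff (hcys j hjV) (hdys j hjV)).mpr ⟨hy1, hy2⟩
      have hstabj1 : lo j ≤ stb j := (stabN_spec (hlohi j)).1
      have hstabj2 : stb j ≤ hi j := (stabN_spec (hlohi j)).2.1
      have hxj : a j ≤ p.1 ∧ p.1 ≤ b j := by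
        by_cases hside : stb u ≤ xh
        · have hselB : sel u = ρB := by simp only [hsel]; rw [if_pos hside]
          have hρ' : ρB u < ρB j := by rw [← hselB]; exact hρ
          constructor
          · by_contra hlt
            push_neg at hlt
            have hstrict : xh < lo j := xiR_strict_right (haxs j hjV) hlt
            rw [hjstb] at hstabj1
            omega
          · have hbb : b u ≤ b j := rnk_le_val hjV hρ'
            exact le_trans (hmemE u huE).2.1 hbb
        · have hselA : sel u = ρA := by simp only [hsel]; rw [if_neg hside]
          have hρ' : ρA u < ρA j := by rw [← hselA]; exact hρ
          push_neg at hside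
          constructor
          · have haa : -(a u) ≤ -(a j) :=
              rnk_le_val (V := V') (g := fun i => -(a i)) (f := f) hjV hρ'
            have h6 : a j ≤ a u := by linarith
            exact le_trans h6 (hmemE u huE).1
          · by_contra hlt
            push_neg at hlt
            have hstrict : hi j < xh := xiR_strict_left (hbxs j hjV) hlt
            rw [hjstb] at hstabj2
            omega
      have hjE : j ∈ E := by
        simp only [hE, Finset.mem_filter]
        refine ⟨hjV, ?_⟩
        rw [hR j]
        simp only [Set.mem_prod, Set.mem_Icc]
        exact ⟨⟨hxj.1, hxj.2⟩, ⟨hcyj.1, hcyj.2⟩⟩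
      exact ⟨⟨hjE, hjlev⟩, hρ⟩
    -- distinct members of S1 get distinct colors
    have hφinj : ∀ u ∈ S1, ∀ v ∈ S1, u ≠ v →
        lev u * (12*k+1) + ψ u ≠ lev v * (12*k+1) + ψ v := by
      intro u huS1 v hvS1 huv heq
      have huE : u ∈ E := hS1E huS1
      have hvE : v ∈ E := hS1E hvS1
      have huV : u ∈ V' := hEV huE
      have hvV : v ∈ V' := hEV hvE
      have hψu := hψb u
      have hψv := hψb v
      have hlevuv : lev u = lev v := by
        have h1 : (lev u * (12*k+1) + ψ u) / (12*k+1) = lev u := by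
          rw [Nat.mul_comm, Nat.mul_add_div (by omega), Nat.div_eq_of_lt hψu, Nat.add_zero]
        have h2 : (lev v * (12*k+1) + ψ v) / (12*k+1) = lev v := by
          rw [Nat.mul_comm, Nat.mul_add_div (by omega), Nat.div_eq_of_lt hψv, Nat.add_zero]
        rw [← h1, ← h2, heq]
      have hψuv : ψ u = ψ v := by
        rw [hlevuv] at heq
        omega
      have hstabuv : stb u = stb v := hsame u huE v hvE hlevuv
      have hnodeeq : nodeF v = nodeF u := by
        apply Finset.filter_congr
        intro w _
        rw [hlevuv, hstabuv]
      have hseluv : sel v = sel u := by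
        simp only [hsel]
        rw [← hstabuv]
      have hrel : Rel u v := by
        rw [hRel]
        refine ⟨hlevuv, hstabuv, ?_⟩
        have hku := hkey u huS1
        have hkv := hkey v hvS1
        rw [hnodeeq, hseluv] at hkv
        by_cases hside : stb u ≤ xh
        · have hselB : sel u = ρB := by simp only [hsel]; rw [if_pos hside]
          rw [hselB] at hku hkv
          exact Or.inl ⟨yh, hku, hkv⟩
        · have hselA : sel u = ρA := by simp only [hsel]; rw [if_neg hside]
          rw [hselA] at hku hkv
          exact Or.inr ⟨yh, hku, hkv⟩
      exact hψc u huV v hvV (Ne.symm huv) hrel hψuv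
    obtain ⟨S2, hS2sub, hS2card⟩ := Finset.exists_subset_card_eq hS1card
    refine ⟨↑S2, ?_, ?_, ?_⟩
    · rw [hEset]
      exact Finset.coe_subset.mpr (hS2sub.trans hS1E)
    · rw [hEset, Set.ncard_coe_finset, Set.ncard_coe_finset, hS2card]
    · intro u hu v hv heq
      by_contra hne
      exact hφinj u (hS2sub (Finset.mem_coe.mp hu)) v (hS2sub (Finset.mem_coe.mp hv)) hne heq
end

section
/- There exists an absolute constant C such that the following holds. Let k ≥ 2 be an integer, and let R be a finite family of n axis-parallel rectangles in the plane ℝ² such that all rectangles in R intersect a common vertical line {(x, y) : x = t} for some t ∈ ℝ. Then the hypergraph H(R) induced by R admits a k-colorful coloring with at most C·k colors; that is, c_{H(R)}(k) = O(k). -/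
open Finset

namespace Stmt9Aux

open scoped Classical

variable {ι K : Type} [LinearOrder K]

/-- top-k elements of a finset by key `κ` -/
noncomputable def topk (κ : ι → K) (k : ℕ) (A : Finset ι) : Finset ι :=
  A.filter (fun i => (A.filter (fun l => κ l < κ i)).card < k)

lemma rank_lemma (k : ℕ) (F : Finset K) :
    (F.filter fun x => (F.filter (· < x)).card < k).card = min F.card k := by
  induction F using Finset.induction_on_max with
  | empty => simp
  | insert a s ha ih =>
    have has : a ∉ s := fun h => lt_irrefl a (ha a h)
    have h1 : ∀ x ∈ s, (insert a s).filter (· < x) = s.filter (· < x) := by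
      intro x hx
      rw [Finset.filter_insert, if_neg (by exact fun h => absurd (ha x hx) (not_lt.2 h.le))]
    have h2 : (insert a s).filter (· < a) = s := by
      rw [Finset.filter_insert, if_neg (lt_irrefl a)]
      exact Finset.filter_true_of_mem (fun x hx => ha x hx)
    have hsplit : (insert a s).filter (fun x => ((insert a s).filter (· < x)).card < k)
        = (if s.card < k then {a} else ∅) ∪ s.filter (fun x => (s.filter (· < x)).card < k) := by
      ext x
      simp only [Finset.mem_filter, Finset.mem_insert, Finset.mem_union]
      constructor
      · rintro ⟨hx | hx, hc⟩
        · subst hx; rw [h2] at hc; left; simp [hc]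
        · right; rw [h1 x hx] at hc; exact ⟨hx, hc⟩
      · rintro (hx | ⟨hx, hc⟩)
        · by_cases hs : s.card < k
          · simp only [if_pos hs, Finset.mem_singleton] at hx
            subst hx; exact ⟨Or.inl rfl, by rw [h2]; exact hs⟩
          · simp [if_neg hs] at hx
        · exact ⟨Or.inr hx, by rw [h1 x hx]; exact hc⟩
    rw [hsplit, Finset.card_insert_of_notMem has]
    by_cases hs : s.card < k
    · rw [if_pos hs, Finset.card_union_of_disjoint, Finset.card_singleton, ih]
      · rw [min_eq_left hs.le, min_eq_left hs]
        omega
      · simp only [Finset.disjoint_singleton_left, Finset.mem_filter]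
        exact fun h => has h.1
    · rw [if_neg hs, Finset.empty_union, ih]
      push_neg at hs
      rw [min_eq_right hs, min_eq_right (le_trans hs (Nat.le_succ _))]

variable {κ : ι → K}

lemma filter_key_image (hκ : Function.Injective κ) (A : Finset ι) (i : ι) :
    ((A.image κ).filter (· < κ i)) = (A.filter (fun l => κ l < κ i)).image κ := by
  ext x
  simp only [Finset.mem_filter, Finset.mem_image]
  constructor
  · rintro ⟨⟨l, hl, rfl⟩, hx⟩; exact ⟨l, ⟨hl, hx⟩, rfl⟩
  · rintro ⟨l, ⟨hl, hx⟩, rfl⟩; exact ⟨⟨l, hl, rfl⟩, hx⟩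

lemma depth_eq (hκ : Function.Injective κ) (A : Finset ι) (i : ι) :
    ((A.image κ).filter (· < κ i)).card = (A.filter (fun l => κ l < κ i)).card := by
  rw [filter_key_image hκ, Finset.card_image_of_injective _ hκ]

lemma card_topk (hκ : Function.Injective κ) (k : ℕ) (A : Finset ι) :
    (topk κ k A).card = min A.card k := by
  have himg : (topk κ k A).image κ = (A.image κ).filter (fun x => ((A.image κ).filter (· < x)).card < k) := by
    unfold topk
    ext x
    simp only [Finset.mem_image, Finset.mem_filter]
    constructor
    · rintro ⟨l, ⟨hl, hc⟩, rfl⟩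
      exact ⟨⟨l, hl, rfl⟩, by rw [depth_eq hκ]; exact hc⟩
    · rintro ⟨⟨l, hl, rfl⟩, hc⟩
      rw [depth_eq hκ] at hc
      exact ⟨l, ⟨hl, hc⟩, rfl⟩
  have := rank_lemma k (A.image κ)
  rw [← himg, Finset.card_image_of_injective _ hκ, Finset.card_image_of_injective _ hκ] at this
  exact this

lemma card_topk_le (hκ : Function.Injective κ) (k : ℕ) (A : Finset ι) :
    (topk κ k A).card ≤ k := by rw [card_topk hκ]; exact min_le_right _ _

lemma topk_subset (k : ℕ) (A : Finset ι) : topk κ k A ⊆ A := Finset.filter_subset _ _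

lemma depth_strictMono (hκ : Function.Injective κ) (A : Finset ι) {i j : ι}
    (hi : i ∈ A) (hij : κ i < κ j) :
    (A.filter (fun l => κ l < κ i)).card < (A.filter (fun l => κ l < κ j)).card := by
  apply Finset.card_lt_card
  have hsub : A.filter (fun l => κ l < κ i) ⊆ A.filter (fun l => κ l < κ j) := by
    intro l hl
    rw [Finset.mem_filter] at hl ⊢
    exact ⟨hl.1, lt_trans hl.2 hij⟩
  exact (Finset.ssubset_iff_of_subset hsub).2
    ⟨i, Finset.mem_filter.2 ⟨hi, hij⟩, fun h => absurd ((Finset.mem_filter.1 h).2) (lt_irrefl _)⟩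

/-- STEP: how much the top-k can change when the active set changes. -/
lemma topk_step (hκ : Function.Injective κ) (k : ℕ) (A A' : Finset ι) :
    (topk κ k A' \ topk κ k A).card ≤ (A' \ A).card + (A \ A').card := by
  classical
  set q := (A \ A').card with hq
  have hsub : topk κ k A' \ topk κ k A ⊆ (A' \ A) ∪
      (A'.filter (fun j => ((A'.filter (fun l => κ l < κ j)).card < k ∧
        k ≤ (A.filter (fun l => κ l < κ j)).card))) := by
    intro j hj
    rw [Finset.mem_sdiff] at hj
    obtain ⟨hj1, hj2⟩ := hj
    have hjA' : j ∈ A' := topk_subset _ _ hj1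
    have hd' : (A'.filter (fun l => κ l < κ j)).card < k := (Finset.mem_filter.1 hj1).2
    by_cases hjA : j ∈ A
    · refine Finset.mem_union_right _ (Finset.mem_filter.2 ⟨hjA', hd', ?_⟩)
      by_contra h
      push_neg at h
      exact hj2 (Finset.mem_filter.2 ⟨hjA, h⟩)
    · exact Finset.mem_union_left _ (Finset.mem_sdiff.2 ⟨hjA', hjA⟩)
  refine le_trans (Finset.card_le_card hsub) ?_
  refine le_trans (Finset.card_union_le _ _) ?_
  refine Nat.add_le_add_left ?_ _
  -- promoted set has card ≤ q
  set Q := A'.filter (fun j => ((A'.filter (fun l => κ l < κ j)).card < k ∧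
        k ≤ (A.filter (fun l => κ l < κ j)).card)) with hQ
  have hmap : ∀ j ∈ Q, (A'.filter (fun l => κ l < κ j)).card ∈ Finset.Ico (k - q) k := by
    intro j hj
    rw [hQ, Finset.mem_filter] at hj
    obtain ⟨hjA', hd', hd⟩ := hj
    refine Finset.mem_Ico.2 ⟨?_, hd'⟩
    have hcover : A.filter (fun l => κ l < κ j) ⊆ (A'.filter (fun l => κ l < κ j)) ∪ (A \ A') := by
      intro l hl
      rw [Finset.mem_filter] at hl
      by_cases hlA' : l ∈ A'
      · exact Finset.mem_union_left _ (Finset.mem_filter.2 ⟨hlA', hl.2⟩)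
      · exact Finset.mem_union_right _ (Finset.mem_sdiff.2 ⟨hl.1, hlA'⟩)
    have := le_trans hd (le_trans (Finset.card_le_card hcover) (Finset.card_union_le _ _))
    omega
  have hinj : Set.InjOn (fun j => (A'.filter (fun l => κ l < κ j)).card) Q := by
    intro x hx y hy hxy
    rw [Finset.mem_coe, Finset.mem_filter] at hx hy
    by_contra hne
    rcases lt_trichotomy (κ x) (κ y) with h | h | h
    · exact absurd hxy (Nat.ne_of_lt (depth_strictMono hκ A' hx.1 h))
    · exact hne (hκ h)
    · exact absurd hxy.symm (Nat.ne_of_lt (depth_strictMono hκ A' hy.1 h))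
  calc Q.card = (Q.image (fun j => (A'.filter (fun l => κ l < κ j)).card)).card :=
        (Finset.card_image_of_injOn hinj).symm
    _ ≤ (Finset.Ico (k - q) k).card := Finset.card_le_card (by
        intro x hx
        rw [Finset.mem_image] at hx
        obtain ⟨j, hj, rfl⟩ := hx
        exact hmap j hj)
    _ ≤ q := by rw [Nat.card_Ico]; omega

/-- down-closed subsets intersected with top-k have cardinality `min |E| k`. -/
lemma card_inter_topk (hκ : Function.Injective κ) (k : ℕ) {A E : Finset ι}
    (hEA : E ⊆ A) (hdown : ∀ j ∈ E, ∀ l ∈ A, κ l < κ j → l ∈ E) :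
    (E ∩ topk κ k A).card = min E.card k := by
  classical
  have hfe : ∀ i ∈ E, A.filter (fun l => κ l < κ i) = E.filter (fun l => κ l < κ i) := by
    intro i hi
    apply Finset.Subset.antisymm
    · intro l hl
      rw [Finset.mem_filter] at hl ⊢
      exact ⟨hdown i hi l hl.1 hl.2, hl.2⟩
    · intro l hl
      rw [Finset.mem_filter] at hl ⊢
      exact ⟨hEA hl.1, hl.2⟩
  have : E ∩ topk κ k A = topk κ k E := by
    unfold topk
    ext i
    simp only [Finset.mem_inter, Finset.mem_filter]
    constructor
    · rintro ⟨hiE, hiA, hc⟩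
      rw [hfe i hiE] at hc
      exact ⟨hiE, hc⟩
    · rintro ⟨hiE, hc⟩
      rw [← hfe i hiE] at hc
      exact ⟨hiE, hEA hiE, hc⟩
  rw [this, card_topk hκ]

/-! ### the sweep -/

variable (κ) in
/-- Active intervals at sweep position `y`. -/
noncomputable def Act (s : Finset ι) (c d : ι → ℝ) (y : ℝ) : Finset ι :=
  s.filter (fun l => c l ≤ y ∧ y ≤ d l)

variable (κ) in
/-- Top-k active intervals at `y`. -/
noncomputable def Tk (s : Finset ι) (c d : ι → ℝ) (k : ℕ) (y : ℝ) : Finset ι :=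
  topk κ k (Act s c d y)

variable (κ) in
/-- ordered pairs of top-k elements at `y` -/
noncomputable def PO (s : Finset ι) (c d : ι → ℝ) (k : ℕ) (y : ℝ) : Finset (ι × ι) :=
  (Tk κ s c d k y) ×ˢ (Tk κ s c d k y)

/-- accumulated union of `f` along a walk -/
noncomputable def Uacc (f : ℝ → Finset (ι × ι)) : ℝ → List ℝ → Finset (ι × ι)
  | p, [] => f p
  | p, w :: tl => f p ∪ Uacc f w tl

/-- total symmetric difference of active sets along a walk -/
noncomputable def sumE (s : Finset ι) (c d : ι → ℝ) : ℝ → List ℝ → ℕ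
  | _, [] => 0
  | p, w :: tl => ((Act s c d w \ Act s c d p).card + (Act s c d p \ Act s c d w).card)
      + sumE s c d w tl

lemma subset_Uacc (f : ℝ → Finset (ι × ι)) :
    ∀ (L : List ℝ) (p : ℝ) (w : ℝ), (w = p ∨ w ∈ L) → f w ⊆ Uacc f p L := by
  intro L
  induction L with
  | nil =>
    rintro p w (rfl | hw)
    · exact Finset.Subset.refl _
    · simp at hw
  | cons v tl ih =>
    rintro p w (rfl | hw)
    · exact Finset.subset_union_left
    · rw [List.mem_cons] at hw
      exact subset_trans (ih v w (by tauto)) Finset.subset_union_right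

variable (hκ : Function.Injective κ)
include hκ

lemma card_PO_le (s : Finset ι) (c d : ι → ℝ) (k : ℕ) (y : ℝ) :
    (PO κ s c d k y).card ≤ 2 * k * (Act s c d y).card := by
  rw [PO, Finset.card_product]
  have h1 : (Tk κ s c d k y).card ≤ k := card_topk_le hκ _ _
  have h2 : (Tk κ s c d k y).card ≤ (Act s c d y).card :=
    Finset.card_le_card (topk_subset _ _)
  calc (Tk κ s c d k y).card * (Tk κ s c d k y).card ≤ k * (Act s c d y).card :=
        Nat.mul_le_mul h1 h2
    _ ≤ 2 * k * (Act s c d y).card := by ring_nf; omega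

lemma card_PO_sdiff_le (s : Finset ι) (c d : ι → ℝ) (k : ℕ) (p w : ℝ) :
    ((PO κ s c d k p) \ (PO κ s c d k w)).card ≤
      2 * k * ((Act s c d p \ Act s c d w).card + (Act s c d w \ Act s c d p).card) := by
  set T := Tk κ s c d k p
  set T' := Tk κ s c d k w
  set N := T \ T' with hN
  have hsub : (PO κ s c d k p) \ (PO κ s c d k w) ⊆ (N ×ˢ T) ∪ (T ×ˢ N) := by
    intro pr hpr
    rw [Finset.mem_sdiff, PO, PO, Finset.mem_product, Finset.mem_product] at hpr
    obtain ⟨⟨h1, h2⟩, h3⟩ := hpr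
    rw [Finset.mem_union, Finset.mem_product, Finset.mem_product]
    by_cases hc1 : pr.1 ∈ T'
    · by_cases hc2 : pr.2 ∈ T'
      · exact absurd ⟨hc1, hc2⟩ h3
      · exact Or.inr ⟨h1, Finset.mem_sdiff.2 ⟨h2, hc2⟩⟩
    · exact Or.inl ⟨Finset.mem_sdiff.2 ⟨h1, hc1⟩, h2⟩
  have hT : T.card ≤ k := card_topk_le hκ _ _
  have hNc : N.card ≤ (Act s c d p \ Act s c d w).card + (Act s c d w \ Act s c d p).card := by
    have := topk_step hκ k (Act s c d w) (Act s c d p)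
    exact this
  calc ((PO κ s c d k p) \ (PO κ s c d k w)).card
      ≤ ((N ×ˢ T) ∪ (T ×ˢ N)).card := Finset.card_le_card hsub
    _ ≤ N.card * T.card + T.card * N.card := by
        refine le_trans (Finset.card_union_le _ _) ?_
        rw [Finset.card_product, Finset.card_product]
    _ ≤ 2 * k * N.card := by nlinarith
    _ ≤ _ := by
        have := hNc
        nlinarith

lemma card_Uacc_le (s : Finset ι) (c d : ι → ℝ) (k : ℕ) :
    ∀ (L : List ℝ) (p : ℝ),
      (Uacc (PO κ s c d k) p L).card ≤ 2 * k * (Act s c d p).card + 4 * k * sumE s c d p L := by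
  intro L
  induction L with
  | nil =>
    intro p
    simpa [Uacc, sumE] using card_PO_le hκ s c d k p
  | cons w tl ih =>
    intro p
    have hstep : (Uacc (PO κ s c d k) p (w :: tl)).card ≤
        (Uacc (PO κ s c d k) w tl).card + ((PO κ s c d k p) \ (PO κ s c d k w)).card := by
      have h1 : Uacc (PO κ s c d k) p (w :: tl) =
          ((PO κ s c d k p) \ (Uacc (PO κ s c d k) w tl)) ∪ (Uacc (PO κ s c d k) w tl) := by
        rw [Uacc, Finset.sdiff_union_self_eq_union]
      rw [h1]
      refine le_trans (Finset.card_union_le _ _) ?_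
      rw [Nat.add_comm]
      refine Nat.add_le_add_left (Finset.card_le_card ?_) _
      exact Finset.sdiff_subset_sdiff (Finset.Subset.refl _)
        (subset_Uacc _ tl w w (Or.inl rfl))
    have h2 := card_PO_sdiff_le hκ s c d k p w
    have h3 := ih w
    have h4 : (Act s c d w).card ≤ (Act s c d p).card + (Act s c d w \ Act s c d p).card := by
      refine le_trans (Finset.card_le_card (?_ : Act s c d w ⊆ Act s c d p ∪ (Act s c d w \ Act s c d p))) (Finset.card_union_le _ _)
      intro l hl
      rw [Finset.mem_union, Finset.mem_sdiff]
      by_cases h : l ∈ Act s c d p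
      · exact Or.inl h
      · exact Or.inr ⟨hl, h⟩
    rw [sumE]
    set a1 := (Act s c d p).card
    set a2 := (Act s c d w).card
    set d1 := (Act s c d p \ Act s c d w).card
    set d2 := (Act s c d w \ Act s c d p).card
    set S := sumE s c d w tl
    have m1 : 2*k*a2 ≤ 2*k*(a1+d2) := Nat.mul_le_mul_left _ h4
    have e1 : 2*k*(a1+d2) = 2*k*a1 + 2*k*d2 := by ring
    have e3 : 2*k*(d1+d2) = 2*k*d1 + 2*k*d2 := by ring
    have e2 : 4*k*(d2+d1+S) = 4*k*d2 + 4*k*d1 + 4*k*S := by ring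
    have e4 : 4*k*d1 = 2*k*d1 + 2*k*d1 := by ring
    have e5 : 4*k*d2 = 2*k*d2 + 2*k*d2 := by ring
    have e6 : 4*k*S = 2*(2*k*S) := by ring
    omega

omit hκ

lemma sumE_le (s : Finset ι) (c d : ι → ℝ) :
    ∀ (L : List ℝ) (p : ℝ), List.Chain (· < ·) p L →
      sumE s c d p L ≤ (s.filter fun l => p < c l).card + (s.filter fun l => p ≤ d l).card := by
  intro L
  induction L with
  | nil => intro p _; simp [sumE]
  | cons w tl ih =>
    intro p hchain
    rw [List.Chain, List.chain_cons] at hchain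
    obtain ⟨hpw, hch⟩ := hchain
    have h1 : Act s c d w \ Act s c d p ⊆ s.filter (fun l => p < c l ∧ c l ≤ w) := by
      intro l hl
      rw [Finset.mem_sdiff, Act, Act, Finset.mem_filter, Finset.mem_filter] at hl
      obtain ⟨⟨hls, hcw, hwd⟩, hnp⟩ := hl
      rw [Finset.mem_filter]
      refine ⟨hls, ?_, hcw⟩
      by_contra h
      push_neg at h
      exact hnp ⟨hls, h, le_trans hpw.le hwd⟩
    have h2 : Act s c d p \ Act s c d w ⊆ s.filter (fun l => p ≤ d l ∧ d l < w) := by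
      intro l hl
      rw [Finset.mem_sdiff, Act, Act, Finset.mem_filter, Finset.mem_filter] at hl
      obtain ⟨⟨hls, hcp, hpd⟩, hnw⟩ := hl
      rw [Finset.mem_filter]
      refine ⟨hls, hpd, ?_⟩
      by_contra h
      push_neg at h
      exact hnw ⟨hls, le_trans hcp hpw.le, h⟩
    have key1 : (s.filter (fun l => p < c l ∧ c l ≤ w)).card + (s.filter fun l => w < c l).card
        ≤ (s.filter fun l => p < c l).card := by
      rw [← Finset.card_union_of_disjoint (by
        rw [Finset.disjoint_filter]
        intro x _ hx hx2
        exact absurd hx2 (not_lt.2 hx.2))]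
      apply Finset.card_le_card
      intro l hl
      rw [Finset.mem_union, Finset.mem_filter, Finset.mem_filter] at hl
      rw [Finset.mem_filter]
      rcases hl with ⟨hls, h, _⟩ | ⟨hls, h⟩
      · exact ⟨hls, h⟩
      · exact ⟨hls, lt_trans hpw h⟩
    have key2 : (s.filter (fun l => p ≤ d l ∧ d l < w)).card + (s.filter fun l => w ≤ d l).card
        ≤ (s.filter fun l => p ≤ d l).card := by
      rw [← Finset.card_union_of_disjoint (by
        rw [Finset.disjoint_filter]
        intro x _ hx hx2
        exact absurd hx2 (not_le.2 hx.2))]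
      apply Finset.card_le_card
      intro l hl
      rw [Finset.mem_union, Finset.mem_filter, Finset.mem_filter] at hl
      rw [Finset.mem_filter]
      rcases hl with ⟨hls, h, _⟩ | ⟨hls, h⟩
      · exact ⟨hls, h⟩
      · exact ⟨hls, le_trans hpw.le h⟩
    have ihw := ih w hch
    have c1 := Finset.card_le_card h1
    have c2 := Finset.card_le_card h2
    rw [sumE]
    omega

variable (κ) in
/-- the finite witness set -/
noncomputable def Wit (s : Finset ι) (c d : ι → ℝ) : Finset ℝ :=
  (s.image c ∪ s.image d) ∪
    ((s.image c ∪ s.image d) ×ˢ (s.image c ∪ s.image d)).image (fun pr => (pr.1 + pr.2) / 2)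

lemma snap (s : Finset ι) (c d : ι → ℝ) (y : ℝ) (hy : (Act s c d y).Nonempty) :
    ∃ w ∈ Wit s c d, Act s c d y = Act s c d w := by
  classical
  set EPs := s.image c ∪ s.image d with hEPs
  by_cases hyE : y ∈ EPs
  · exact ⟨y, Finset.mem_union_left _ hyE, rfl⟩
  obtain ⟨l₀, hl₀⟩ := hy
  rw [Act, Finset.mem_filter] at hl₀
  obtain ⟨hl₀s, hcl₀, hdl₀⟩ := hl₀
  have hcE : c l₀ ∈ EPs := Finset.mem_union_left _ (Finset.mem_image_of_mem c hl₀s)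
  have hdE : d l₀ ∈ EPs := Finset.mem_union_right _ (Finset.mem_image_of_mem d hl₀s)
  have hclt : c l₀ < y := lt_of_le_of_ne hcl₀ (fun h => hyE (h ▸ hcE))
  have hdgt : y < d l₀ := lt_of_le_of_ne hdl₀ (fun h => hyE (h.symm ▸ hdE))
  have hne1 : (EPs.filter (· < y)).Nonempty := ⟨c l₀, Finset.mem_filter.2 ⟨hcE, hclt⟩⟩
  have hne2 : (EPs.filter (y < ·)).Nonempty := ⟨d l₀, Finset.mem_filter.2 ⟨hdE, hdgt⟩⟩
  set lo := (EPs.filter (· < y)).max' hne1 with hlo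
  set hi := (EPs.filter (y < ·)).min' hne2 with hhi
  have hloE : lo ∈ EPs ∧ lo < y := by
    have := (EPs.filter (· < y)).max'_mem hne1
    rw [Finset.mem_filter] at this; exact this
  have hhiE : hi ∈ EPs ∧ y < hi := by
    have := (EPs.filter (y < ·)).min'_mem hne2
    rw [Finset.mem_filter] at this; exact this
  set w := (lo + hi) / 2 with hw
  have hwW : w ∈ Wit s c d := by
    refine Finset.mem_union_right _ (Finset.mem_image.2 ⟨(lo, hi), ?_, rfl⟩)
    exact Finset.mem_product.2 ⟨hloE.1, hhiE.1⟩
  have hlow : lo < w := by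
    rw [hw]; linarith [hloE.2, hhiE.2]
  have hwhi : w < hi := by
    rw [hw]; linarith [hloE.2, hhiE.2]
  refine ⟨w, hwW, ?_⟩
  -- key: for e ∈ EPs, e ≤ y ↔ e ≤ w, and y ≤ e ↔ w ≤ e
  have key1 : ∀ e ∈ EPs, (e ≤ y ↔ e ≤ w) := by
    intro e he
    constructor
    · intro h
      have : e < y := lt_of_le_of_ne h (fun hh => hyE (hh ▸ he))
      have h2 : e ≤ lo := by
        have hm : e ∈ EPs.filter (· < y) := Finset.mem_filter.2 ⟨he, this⟩
        rw [hlo]; exact Finset.le_max' _ e hm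
      linarith
    · intro h
      by_contra hcon
      push_neg at hcon
      have h2 : hi ≤ e := by
        have hm : e ∈ EPs.filter (y < ·) := Finset.mem_filter.2 ⟨he, hcon⟩
        rw [hhi]; exact Finset.min'_le _ e hm
      linarith
  have key2 : ∀ e ∈ EPs, (y ≤ e ↔ w ≤ e) := by
    intro e he
    constructor
    · intro h
      have : y < e := lt_of_le_of_ne h (fun hh => hyE (hh.symm ▸ he))
      have h2 : hi ≤ e := by
        have hm : e ∈ EPs.filter (y < ·) := Finset.mem_filter.2 ⟨he, this⟩
        rw [hhi]; exact Finset.min'_le _ e hm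
      linarith
    · intro h
      by_contra hcon
      push_neg at hcon
      have h2 : e ≤ lo := by
        have hm : e ∈ EPs.filter (· < y) := Finset.mem_filter.2 ⟨he, hcon⟩
        rw [hlo]; exact Finset.le_max' _ e hm
      linarith
  ext l
  rw [Act, Act, Finset.mem_filter, Finset.mem_filter]
  constructor
  · rintro ⟨hls, h1, h2⟩
    exact ⟨hls, (key1 (c l) (Finset.mem_union_left _ (Finset.mem_image_of_mem c hls))).1 h1,
      (key2 (d l) (Finset.mem_union_right _ (Finset.mem_image_of_mem d hls))).1 h2⟩
  · rintro ⟨hls, h1, h2⟩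
    exact ⟨hls, (key1 (c l) (Finset.mem_union_left _ (Finset.mem_image_of_mem c hls))).2 h1,
      (key2 (d l) (Finset.mem_union_right _ (Finset.mem_image_of_mem d hls))).2 h2⟩

include hκ in
lemma card_pairs_le (s : Finset ι) (c d : ι → ℝ) (k : ℕ) :
    ((s ×ˢ s).filter fun pr => ∃ y : ℝ,
        pr.1 ∈ Tk κ s c d k y ∧ pr.2 ∈ Tk κ s c d k y).card ≤ 10 * k * s.card := by
  classical
  set P := (s ×ˢ s).filter fun pr => ∃ y : ℝ,
        pr.1 ∈ Tk κ s c d k y ∧ pr.2 ∈ Tk κ s c d k y with hP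
  rcases hL : (Wit s c d).sort (· ≤ ·) with _ | ⟨w₀, tl⟩
  · -- witness set empty: s is empty
    have hWit : Wit s c d = ∅ := by
      have := Finset.length_sort (α := ℝ) (· ≤ ·) (s := Wit s c d)
      rw [hL] at this
      simp only [List.length_nil] at this
      exact Finset.card_eq_zero.1 this.symm
    have hs : s = ∅ := by
      by_contra hne
      obtain ⟨l, hl⟩ := Finset.nonempty_iff_ne_empty.2 hne
      have : c l ∈ Wit s c d :=
        Finset.mem_union_left _ (Finset.mem_union_left _ (Finset.mem_image_of_mem c hl))
      rw [hWit] at this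
      exact absurd this (Finset.notMem_empty _)
    rw [hP, hs]
    simp
  · have hsorted : List.Pairwise (· < ·) (w₀ :: tl) := by
      rw [← hL]; exact (Finset.sortedLT_sort _).pairwise
    have hchain : List.Chain (· < ·) w₀ tl := by
      exact List.Pairwise.isChain hsorted
    have hPsub : P ⊆ Uacc (PO κ s c d k) w₀ tl := by
      intro pr hpr
      rw [hP, Finset.mem_filter] at hpr
      obtain ⟨hprs, y, hy1, hy2⟩ := hpr
      have hyne : (Act s c d y).Nonempty := ⟨pr.1, topk_subset _ _ hy1⟩
      obtain ⟨w, hwW, hww⟩ := snap s c d y hyne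
      have hTk : Tk κ s c d k y = Tk κ s c d k w := by
        rw [Tk, Tk, hww]
      have hmem : pr ∈ PO κ s c d k w := by
        rw [PO, Finset.mem_product]
        rw [hTk] at hy1 hy2
        exact ⟨hy1, hy2⟩
      have hwL : w ∈ w₀ :: tl := by
        rw [← hL, Finset.mem_sort]; exact hwW
      rw [List.mem_cons] at hwL
      exact subset_Uacc _ tl w₀ w hwL hmem
    have h1 := card_Uacc_le hκ s c d k tl w₀
    have h2 := sumE_le s c d tl w₀ hchain
    have h3 : (Act s c d w₀).card ≤ s.card := Finset.card_le_card (Finset.filter_subset _ _)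
    have h4 : (s.filter fun l => w₀ < c l).card ≤ s.card := Finset.card_le_card (Finset.filter_subset _ _)
    have h5 : (s.filter fun l => w₀ ≤ d l).card ≤ s.card := Finset.card_le_card (Finset.filter_subset _ _)
    have hc := Finset.card_le_card hPsub
    have e1 : 2*k*(Act s c d w₀).card ≤ 2*k*s.card := Nat.mul_le_mul_left _ h3
    have e2 : 4*k*sumE s c d w₀ tl ≤ 4*k*(2*s.card) := by
      refine Nat.mul_le_mul_left _ ?_
      omega
    have e3 : 2*k*s.card + 4*k*(2*s.card) = 10*k*s.card := by ring
    omega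

omit hκ

/-- greedy coloring of a graph with bounded "min-degree in every subfamily" -/
lemma greedy (Adj : ι → ι → Prop) (hsym : ∀ i j, Adj i j → Adj j i)
    (hirr : ∀ i, ¬ Adj i i) (N : ℕ) (hN : 0 < N)
    (hdeg : ∀ s : Finset ι, s.Nonempty → ∃ v ∈ s, (s.filter (fun j => Adj v j)).card < N) :
    ∀ s : Finset ι, ∃ φ : ι → ℕ, (∀ i, φ i < N) ∧
      ∀ i ∈ s, ∀ j ∈ s, Adj i j → φ i ≠ φ j := by
  classical
  intro s
  induction s using Finset.strongInduction with
  | _ s ih =>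
    rcases Finset.eq_empty_or_nonempty s with rfl | hne
    · exact ⟨fun _ => 0, fun _ => hN, by simp⟩
    obtain ⟨v, hvs, hdv⟩ := hdeg s hne
    obtain ⟨φ₀, hφ₀N, hφ₀⟩ := ih (s.erase v) (Finset.erase_ssubset hvs)
    set Cols := ((s.erase v).filter (fun j => Adj v j)).image φ₀ with hCols
    have hColsCard : Cols.card < N := by
      calc Cols.card ≤ ((s.erase v).filter (fun j => Adj v j)).card := Finset.card_image_le
        _ ≤ (s.filter (fun j => Adj v j)).card :=
            Finset.card_le_card (Finset.filter_subset_filter _ (Finset.erase_subset _ _))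
        _ < N := hdv
    have hex : ((Finset.range N) \ Cols).Nonempty := by
      apply Finset.card_pos.1
      have := Finset.le_card_sdiff Cols (Finset.range N)
      have hr : (Finset.range N).card = N := Finset.card_range N
      omega
    obtain ⟨m, hm⟩ := hex
    rw [Finset.mem_sdiff, Finset.mem_range] at hm
    refine ⟨Function.update φ₀ v m, ?_, ?_⟩
    · intro i
      by_cases h : i = v
      · subst h; rw [Function.update_self]; exact hm.1
      · rw [Function.update_of_ne h]; exact hφ₀N i
    · intro i hi j hj hadj
      by_cases hiv : i = v
      · subst hiv
        have hjv : j ≠ i := by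
          rintro rfl
          exact hirr j hadj
        rw [Function.update_self, Function.update_of_ne hjv]
        have hjc : φ₀ j ∈ Cols := by
          rw [hCols]
          exact Finset.mem_image_of_mem _ (Finset.mem_filter.2
            ⟨Finset.mem_erase.2 ⟨hjv, hj⟩, hadj⟩)
        exact fun h => hm.2 (h ▸ hjc)
      · by_cases hjv : j = v
        · subst hjv
          rw [Function.update_self, Function.update_of_ne hiv]
          have hic : φ₀ i ∈ Cols := by
            rw [hCols]
            exact Finset.mem_image_of_mem _ (Finset.mem_filter.2
              ⟨Finset.mem_erase.2 ⟨hiv, hi⟩, hsym _ _ hadj⟩)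
          exact fun h => hm.2 (h.symm ▸ hic)
        · rw [Function.update_of_ne hiv, Function.update_of_ne hjv]
          exact hφ₀ i (Finset.mem_erase.2 ⟨hiv, hi⟩) j (Finset.mem_erase.2 ⟨hjv, hj⟩) hadj

lemma Tk_mono [Fintype ι] (s : Finset ι) (c d : ι → ℝ) (k : ℕ) (y : ℝ) {i : ι}
    (hi : i ∈ Tk κ Finset.univ c d k y) (his : i ∈ s) :
    i ∈ Tk κ s c d k y := by
  classical
  rw [Tk, topk, Finset.mem_filter] at hi ⊢
  obtain ⟨hiA, hic⟩ := hi
  rw [Act, Finset.mem_filter] at hiA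
  constructor
  · rw [Act, Finset.mem_filter]
    exact ⟨his, hiA.2⟩
  · refine lt_of_le_of_lt (Finset.card_le_card ?_) hic
    intro l hl
    rw [Finset.mem_filter] at hl ⊢
    rw [Act, Finset.mem_filter] at hl ⊢
    exact ⟨⟨Finset.mem_univ l, hl.1.2⟩, hl.2⟩

variable [Fintype ι]

lemma min_degree (κ₁ κ₂ : ι → K) (hκ₁ : Function.Injective κ₁)
    (hκ₂ : Function.Injective κ₂) (c d : ι → ℝ) (k : ℕ)
    (s : Finset ι) (hne : s.Nonempty) :
    ∃ v ∈ s, ∀ r : Finset ι, (∀ j ∈ r, j ∈ s ∧ (v ≠ j ∧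
      ((∃ y : ℝ, v ∈ Tk κ₁ Finset.univ c d k y ∧ j ∈ Tk κ₁ Finset.univ c d k y) ∨
       (∃ y : ℝ, v ∈ Tk κ₂ Finset.univ c d k y ∧ j ∈ Tk κ₂ Finset.univ c d k y)))) →
      r.card < 20 * k + 1 := by
  classical
  set AdjT := fun v j => v ≠ j ∧
      ((∃ y : ℝ, v ∈ Tk κ₁ Finset.univ c d k y ∧ j ∈ Tk κ₁ Finset.univ c d k y) ∨
       (∃ y : ℝ, v ∈ Tk κ₂ Finset.univ c d k y ∧ j ∈ Tk κ₂ Finset.univ c d k y)) with hAdjT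
  by_contra hcon
  push_neg at hcon
  have hcon2 : ∀ v ∈ s, 20 * k + 1 ≤ (s.filter (fun j => AdjT v j)).card := by
    intro v hv
    obtain ⟨r, hr1, hr2⟩ := hcon v hv
    refine le_trans hr2 (Finset.card_le_card ?_)
    intro j hj
    rw [Finset.mem_filter]
    exact hr1 j hj
  -- sum of degrees = number of adjacent ordered pairs
  set T := (s ×ˢ s).filter (fun pr => AdjT pr.1 pr.2) with hT
  have hsum : T.card = ∑ v ∈ s, (s.filter (fun j => AdjT v j)).card := by
    rw [hT]
    rw [Finset.card_eq_sum_card_fiberwise (f := Prod.fst) (t := s) (by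
      intro pr hpr
      rw [Finset.mem_coe, Finset.mem_filter, Finset.mem_product] at hpr
      exact hpr.1.1)]
    refine Finset.sum_congr rfl ?_
    intro v hv
    apply Finset.card_bij (fun pr _ => pr.2)
    · intro pr hpr
      rw [Finset.mem_filter, Finset.mem_filter, Finset.mem_product] at hpr
      rw [Finset.mem_filter]
      obtain ⟨⟨⟨_, h2⟩, h3⟩, h4⟩ := hpr
      exact ⟨h2, h4 ▸ h3⟩
    · intro pr1 h1 pr2 h2 heq
      rw [Finset.mem_filter, Finset.mem_filter] at h1 h2
      have e1 : pr1.1 = v := h1.2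
      have e2 : pr2.1 = v := h2.2
      exact Prod.ext (e1.trans e2.symm) heq
    · intro j hj
      rw [Finset.mem_filter] at hj
      refine ⟨(v, j), ?_, rfl⟩
      rw [Finset.mem_filter, Finset.mem_filter, Finset.mem_product]
      exact ⟨⟨⟨hv, hj.1⟩, hj.2⟩, rfl⟩
  -- T is contained in union of the two pair sets (wrt s)
  have hTsub : T ⊆
      ((s ×ˢ s).filter fun pr => ∃ y : ℝ, pr.1 ∈ Tk κ₁ s c d k y ∧ pr.2 ∈ Tk κ₁ s c d k y) ∪
      ((s ×ˢ s).filter fun pr => ∃ y : ℝ, pr.1 ∈ Tk κ₂ s c d k y ∧ pr.2 ∈ Tk κ₂ s c d k y) := by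
    intro pr hpr
    rw [hT, Finset.mem_filter] at hpr
    obtain ⟨hps, _, hcase⟩ := hpr
    rw [Finset.mem_product] at hps
    rw [Finset.mem_union, Finset.mem_filter, Finset.mem_filter]
    rcases hcase with ⟨y, h1, h2⟩ | ⟨y, h1, h2⟩
    · exact Or.inl ⟨Finset.mem_product.2 hps, y, Tk_mono _ _ _ _ _ h1 hps.1,
        Tk_mono _ _ _ _ _ h2 hps.2⟩
    · exact Or.inr ⟨Finset.mem_product.2 hps, y, Tk_mono _ _ _ _ _ h1 hps.1,
        Tk_mono _ _ _ _ _ h2 hps.2⟩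
  have hcard : T.card ≤ 20 * k * s.card := by
    calc T.card ≤ _ := Finset.card_le_card hTsub
      _ ≤ _ + _ := Finset.card_union_le _ _
      _ ≤ 10 * k * s.card + 10 * k * s.card :=
          add_le_add (card_pairs_le hκ₁ s c d k) (card_pairs_le hκ₂ s c d k)
      _ = 20 * k * s.card := by ring
  have hlow : (20 * k + 1) * s.card ≤ T.card := by
    rw [hsum]
    calc (20 * k + 1) * s.card = ∑ _v ∈ s, (20 * k + 1) := by
          rw [Finset.sum_const, smul_eq_mul, mul_comm]
      _ ≤ ∑ v ∈ s, (s.filter (fun j => AdjT v j)).card :=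
          Finset.sum_le_sum (fun v hv => hcon2 v hv)
  have hspos : 0 < s.card := Finset.card_pos.2 hne
  nlinarith

end Stmt9Aux

open Stmt9Aux in
theorem stmt9 :
    ∃ C : ℝ, 0 < C ∧
      ∀ (k : ℕ), 2 ≤ k →
        ∀ (ι : Type) [Fintype ι] (R : ι → Set (ℝ × ℝ)) (t : ℝ),
          (∀ i, IsAxisParallelRect (R i)) →
          -- all rectangles intersect the common vertical line `x = t`
          (∀ i, ∃ y : ℝ, ((t, y) : ℝ × ℝ) ∈ R i) →
          ∃ φ : ι → ℕ,
            ((Finset.univ.image φ).card : ℝ) ≤ C * k ∧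
            ∀ p : ℝ × ℝ, ∃ S ⊆ hyperedge R p,
              S.ncard = min (hyperedge R p).ncard k ∧ Set.InjOn φ S := by
  classical
  refine ⟨21, by norm_num, ?_⟩
  intro k hk ι _ R t hrect hstab
  choose a b c d hab hcd hR using hrect
  have hstab' : ∀ i, a i ≤ t ∧ t ≤ b i := by
    intro i
    obtain ⟨y, hy⟩ := hstab i
    rw [hR i] at hy
    exact Set.mem_Icc.1 hy.1
  set eidx : ι → ℕ := fun i => (Fintype.equivFin ι i : ℕ) with heidx
  have heinj : Function.Injective eidx := by
    intro i j h
    exact (Fintype.equivFin ι).injective (Fin.val_injective h)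
  set κ₁ : ι → ℝ ×ₗ ℕ := fun i => toLex (a i, eidx i) with hκ₁def
  set κ₂ : ι → ℝ ×ₗ ℕ := fun i => toLex (-(b i), eidx i) with hκ₂def
  have hκ₁ : Function.Injective κ₁ := by
    intro i j h
    rw [hκ₁def] at h
    simp only [toLex_inj, Prod.mk.injEq] at h
    exact heinj h.2
  have hκ₂ : Function.Injective κ₂ := by
    intro i j h
    rw [hκ₂def] at h
    simp only [toLex_inj, Prod.mk.injEq] at h
    exact heinj h.2
  set AdjT : ι → ι → Prop := fun v j => v ≠ j ∧
      ((∃ y : ℝ, v ∈ Tk κ₁ Finset.univ c d k y ∧ j ∈ Tk κ₁ Finset.univ c d k y) ∨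
       (∃ y : ℝ, v ∈ Tk κ₂ Finset.univ c d k y ∧ j ∈ Tk κ₂ Finset.univ c d k y)) with hAdjT
  clear_value AdjT
  set N := 20 * k + 1 with hN
  obtain ⟨φ, hφN, hφprop⟩ := greedy AdjT
    (by
      intro i j hij
      rw [hAdjT] at hij ⊢
      exact ⟨hij.1.symm, by
        rcases hij.2 with ⟨y, h1, h2⟩ | ⟨y, h1, h2⟩
        · exact Or.inl ⟨y, h2, h1⟩
        · exact Or.inr ⟨y, h2, h1⟩⟩)
    (by intro i hi; rw [hAdjT] at hi; exact hi.1 rfl)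
    N (by omega)
    (by
      intro s hne
      obtain ⟨v, hv, hr⟩ := min_degree κ₁ κ₂ hκ₁ hκ₂ c d k s hne
      refine ⟨v, hv, hr _ ?_⟩
      intro j hj
      rw [Finset.mem_filter] at hj
      obtain ⟨hjs, hadj⟩ := hj
      rw [hAdjT] at hadj
      exact ⟨hjs, hadj⟩)
    Finset.univ
  refine ⟨φ, ?_, ?_⟩
  · -- number of colors
    have himg : Finset.univ.image φ ⊆ Finset.range N := by
      intro m hm
      rw [Finset.mem_image] at hm
      obtain ⟨i, _, rfl⟩ := hm
      exact Finset.mem_range.2 (hφN i)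
    have hcard : (Finset.univ.image φ).card ≤ N := by
      have := Finset.card_le_card himg
      rwa [Finset.card_range] at this
    have hkr : (1 : ℝ) ≤ (k : ℝ) := by
      have : (1 : ℕ) ≤ k := by omega
      exact_mod_cast this
    calc ((Finset.univ.image φ).card : ℝ) ≤ (N : ℝ) := by exact_mod_cast hcard
      _ = 20 * (k : ℝ) + 1 := by rw [hN]; push_cast; ring
      _ ≤ 21 * (k : ℝ) := by linarith
  · -- the colorful property
    intro p
    rcases le_total p.1 t with hx | hx
    · -- left side
      set E := Finset.univ.filter (fun i => a i ≤ p.1 ∧ c i ≤ p.2 ∧ p.2 ≤ d i) with hE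
      have hEeq : hyperedge R p = ↑E := by
        ext i
        simp only [hyperedge, Set.mem_setOf_eq, hE, Finset.coe_filter, Finset.mem_univ,
          true_and, Set.mem_setOf_eq, hR i, Set.mem_prod, Set.mem_Icc]
        constructor
        · rintro ⟨⟨h1, _⟩, h3⟩; exact ⟨h1, h3⟩
        · rintro ⟨h1, h3⟩; exact ⟨⟨h1, le_trans hx (hstab' i).2⟩, h3⟩
      have hEA : E ⊆ Act Finset.univ c d p.2 := by
        intro i hi
        rw [hE, Finset.mem_filter] at hi
        rw [Act, Finset.mem_filter]
        exact ⟨Finset.mem_univ i, hi.2.2⟩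
      have hdown : ∀ j ∈ E, ∀ l ∈ Act Finset.univ c d p.2, κ₁ l < κ₁ j → l ∈ E := by
        intro j hj l hl hlt
        rw [hE, Finset.mem_filter] at hj ⊢
        rw [Act, Finset.mem_filter] at hl
        have hal : a l ≤ a j := by
          rw [hκ₁def] at hlt
          rcases Prod.Lex.lt_iff.1 hlt with h | ⟨h, _⟩
          · exact h.le
          · exact h.le
        exact ⟨Finset.mem_univ l, le_trans hal hj.2.1, hl.2⟩
      set S := E ∩ Tk κ₁ Finset.univ c d k p.2 with hS
      have hScard : S.card = min E.card k := card_inter_topk hκ₁ k hEA hdown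
      refine ⟨↑S, ?_, ?_, ?_⟩
      · rw [hEeq]
        exact Finset.coe_subset.2 (Finset.inter_subset_left)
      · rw [hEeq, Set.ncard_coe_finset, Set.ncard_coe_finset, hScard]
      · intro i hi j hj hphi
        by_contra hne
        have hiS : i ∈ S := hi
        have hjS : j ∈ S := hj
        rw [hS, Finset.mem_inter] at hiS hjS
        exact hφprop i (Finset.mem_univ i) j (Finset.mem_univ j)
          (by rw [hAdjT]; exact ⟨hne, Or.inl ⟨p.2, hiS.2, hjS.2⟩⟩) hphi
    · -- right side
      set E := Finset.univ.filter (fun i => p.1 ≤ b i ∧ c i ≤ p.2 ∧ p.2 ≤ d i) with hE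
      have hEeq : hyperedge R p = ↑E := by
        ext i
        simp only [hyperedge, Set.mem_setOf_eq, hE, Finset.coe_filter, Finset.mem_univ,
          true_and, Set.mem_setOf_eq, hR i, Set.mem_prod, Set.mem_Icc]
        constructor
        · rintro ⟨⟨_, h2⟩, h3⟩; exact ⟨h2, h3⟩
        · rintro ⟨h2, h3⟩; exact ⟨⟨le_trans (hstab' i).1 hx, h2⟩, h3⟩
      have hEA : E ⊆ Act Finset.univ c d p.2 := by
        intro i hi
        rw [hE, Finset.mem_filter] at hi
        rw [Act, Finset.mem_filter]
        exact ⟨Finset.mem_univ i, hi.2.2⟩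
      have hdown : ∀ j ∈ E, ∀ l ∈ Act Finset.univ c d p.2, κ₂ l < κ₂ j → l ∈ E := by
        intro j hj l hl hlt
        rw [hE, Finset.mem_filter] at hj ⊢
        rw [Act, Finset.mem_filter] at hl
        have hal : b j ≤ b l := by
          rw [hκ₂def] at hlt
          rcases Prod.Lex.lt_iff.1 hlt with h | ⟨h, _⟩
          · have h2 : -b l < -b j := h
            linarith
          · have h2 : -b l = -b j := h
            linarith
        exact ⟨Finset.mem_univ l, le_trans hj.2.1 hal, hl.2⟩
      set S := E ∩ Tk κ₂ Finset.univ c d k p.2 with hS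
      have hScard : S.card = min E.card k := card_inter_topk hκ₂ k hEA hdown
      refine ⟨↑S, ?_, ?_, ?_⟩
      · rw [hEeq]
        exact Finset.coe_subset.2 (Finset.inter_subset_left)
      · rw [hEeq, Set.ncard_coe_finset, Set.ncard_coe_finset, hScard]
      · intro i hi j hj hphi
        by_contra hne
        have hiS : i ∈ S := hi
        have hjS : j ∈ S := hj
        rw [hS, Finset.mem_inter] at hiS hjS
        exact hφprop i (Finset.mem_univ i) j (Finset.mem_univ j)
          (by rw [hAdjT]; exact ⟨hne, Or.inr ⟨p.2, hiS.2, hjS.2⟩⟩) hphi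
end

section
/- Let k ≥ 1 be an integer and let n = 2^k − 1. For the discrete interval hypergraph I_n on n vertices, k colors suffice and are necessary for a conflict-free coloring: I_n admits a conflict-free coloring with k colors, and every conflict-free coloring of I_n uses at least k colors; that is, f_{I_n}(1) = k. -/
/-- A coloring `φ` is conflict-free for the discrete interval hypergraph `I_n`
if every discrete interval `{a, …, b} ⊆ {1, …, n}` contains a vertex whose
color appears exactly once in the interval. -/
def IsCFIntervals (n : ℕ) (φ : ℕ → ℕ) : Prop :=
  ∀ a b : ℕ, 1 ≤ a → a ≤ b → b ≤ n →
    ∃ v ∈ Finset.Icc a b, ∀ u ∈ Finset.Icc a b, φ u = φ v → u = v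

/-- Between two numbers with the same 2-adic valuation there is one with a
bigger valuation. -/
lemma exists_between_val (x y m : ℕ) (hx : 0 < x) (hxy : x < y)
    (hfx : x.factorization 2 = m) (hfy : y.factorization 2 = m) :
    ∃ w, x < w ∧ w ≤ y ∧ m + 1 ≤ w.factorization 2 := by
  have hdx : (2 : ℕ) ^ m ∣ x := by rw [← hfx]; exact Nat.ordProj_dvd x 2
  have hdy : (2 : ℕ) ^ m ∣ y := by rw [← hfy]; exact Nat.ordProj_dvd y 2
  set s := x / 2 ^ m with hs
  set t := y / 2 ^ m with ht
  have hxe : 2 ^ m * s = x := Nat.mul_div_cancel' hdx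
  have hye : 2 ^ m * t = y := Nat.mul_div_cancel' hdy
  have hsodd : ¬ (2 : ℕ) ∣ s := by
    have := Nat.not_dvd_ordCompl Nat.prime_two hx.ne'
    rwa [hfx] at this
  have hst : s < t := by
    have : 2 ^ m * s < 2 ^ m * t := by rw [hxe, hye]; exact hxy
    exact lt_of_mul_lt_mul_left this (Nat.zero_le _)
  refine ⟨2 ^ m * (s + 1), ?_, ?_, ?_⟩
  · calc x = 2 ^ m * s := hxe.symm
    _ < 2 ^ m * (s + 1) :=
        Nat.mul_lt_mul_of_pos_left (Nat.lt_succ_self s) (by positivity)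
  · calc 2 ^ m * (s + 1) ≤ 2 ^ m * t := Nat.mul_le_mul_left _ hst
    _ = y := hye
  · have h2 : (2 : ℕ) ∣ s + 1 := by
      rcases Nat.even_or_odd s with he | ho
      · exact absurd he.two_dvd hsodd
      · exact (Nat.even_add_one.mpr (Nat.not_even_iff_odd.mpr ho)).two_dvd
    have hdvd : (2 : ℕ) ^ (m + 1) ∣ 2 ^ m * (s + 1) := by
      rw [pow_succ]
      exact mul_dvd_mul_left _ h2
    have hne : 2 ^ m * (s + 1) ≠ 0 := by positivity
    exact (Nat.Prime.pow_dvd_iff_le_factorization Nat.prime_two hne).mp hdvd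

/-- The valuation coloring is conflict-free. -/
lemma cf_val (n : ℕ) : IsCFIntervals n (fun v => v.factorization 2) := by
  intro a b ha hab hbn
  have hne : (Finset.Icc a b).Nonempty := Finset.nonempty_Icc.mpr hab
  obtain ⟨v, hv, hmax⟩ := Finset.exists_max_image (Finset.Icc a b)
    (fun v => v.factorization 2) hne
  refine ⟨v, hv, ?_⟩
  intro u hu hφ
  simp only at hφ
  by_contra hne'
  simp only [Finset.mem_Icc] at hu hv
  rcases lt_or_gt_of_ne hne' with h | h
  · obtain ⟨w, hw1, hw2, hw3⟩ := exists_between_val u v (u.factorization 2)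
      (lt_of_lt_of_le ha hu.1) h rfl hφ.symm
    have hwmem : w ∈ Finset.Icc a b :=
      Finset.mem_Icc.mpr ⟨le_trans hu.1 hw1.le, le_trans hw2 hv.2⟩
    have := hmax w hwmem
    omega
  · obtain ⟨w, hw1, hw2, hw3⟩ := exists_between_val v u (v.factorization 2)
      (lt_of_lt_of_le ha hv.1) h rfl hφ
    have hwmem : w ∈ Finset.Icc a b :=
      Finset.mem_Icc.mpr ⟨le_trans hv.1 hw1.le, le_trans hw2 hu.2⟩
    have := hmax w hwmem
    omega

/-- Lower bound: long intervals need many colors. -/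
lemma lower_bound (n : ℕ) (φ : ℕ → ℕ) (hcf : IsCFIntervals n φ) :
    ∀ k a b : ℕ, 1 ≤ a → b ≤ n → a + 2 ^ k ≤ b + 2 →
      k ≤ ((Finset.Icc a b).image φ).card := by
  intro k
  induction k with
  | zero => intro a b _ _ _; exact Nat.zero_le _
  | succ k ih =>
    intro a b ha hb hlen
    have h2k : 1 ≤ 2 ^ k := Nat.one_le_two_pow
    have hab : a ≤ b := by have : 2 ≤ 2 ^ (k + 1) := by
                             calc 2 = 2 ^ 1 := rfl
                             _ ≤ 2 ^ (k+1) := Nat.pow_le_pow_right (by norm_num) (by omega)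
                           omega
    obtain ⟨v, hv, huniq⟩ := hcf a b ha hab hb
    have hvm := Finset.mem_Icc.mp hv
    -- pick the long side
    rcases le_or_gt (a + 2 ^ k) (v + 1) with hside | hside
    · -- left side [a, v-1] is long
      have hcard : k ≤ ((Finset.Icc a (v - 1)).image φ).card :=
        ih a (v - 1) ha (by omega) (by omega)
      have hnot : φ v ∉ (Finset.Icc a (v - 1)).image φ := by
        intro hmem
        obtain ⟨u, hu, hφu⟩ := Finset.mem_image.mp hmem
        have hum := Finset.mem_Icc.mp hu
        have : u = v := huniq u (Finset.mem_Icc.mpr ⟨hum.1, by omega⟩) hφu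
        omega
      have hsub : insert (φ v) ((Finset.Icc a (v - 1)).image φ)
          ⊆ (Finset.Icc a b).image φ := by
        intro c hc
        rcases Finset.mem_insert.mp hc with rfl | hc
        · exact Finset.mem_image_of_mem φ hv
        · obtain ⟨u, hu, hφu⟩ := Finset.mem_image.mp hc
          have hum := Finset.mem_Icc.mp hu
          exact hφu ▸ Finset.mem_image_of_mem φ (Finset.mem_Icc.mpr ⟨hum.1, by omega⟩)
      calc k + 1 ≤ ((Finset.Icc a (v - 1)).image φ).card + 1 := by omega
      _ = (insert (φ v) ((Finset.Icc a (v - 1)).image φ)).card :=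
          (Finset.card_insert_of_notMem hnot).symm
      _ ≤ ((Finset.Icc a b).image φ).card := Finset.card_le_card hsub
    · -- right side [v+1, b] is long
      have hlen2 : (v + 1) + 2 ^ k ≤ b + 2 := by
        have : a + 2 ^ k + 2 ^ k ≤ b + 2 := by
          have : 2 ^ (k + 1) = 2 ^ k + 2 ^ k := by ring
          omega
        omega
      have hcard : k ≤ ((Finset.Icc (v + 1) b).image φ).card :=
        ih (v + 1) b (by omega) hb hlen2
      have hnot : φ v ∉ (Finset.Icc (v + 1) b).image φ := by
        intro hmem
        obtain ⟨u, hu, hφu⟩ := Finset.mem_image.mp hmem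
        have hum := Finset.mem_Icc.mp hu
        have : u = v := huniq u (Finset.mem_Icc.mpr ⟨by omega, hum.2⟩) hφu
        omega
      have hsub : insert (φ v) ((Finset.Icc (v + 1) b).image φ)
          ⊆ (Finset.Icc a b).image φ := by
        intro c hc
        rcases Finset.mem_insert.mp hc with rfl | hc
        · exact Finset.mem_image_of_mem φ hv
        · obtain ⟨u, hu, hφu⟩ := Finset.mem_image.mp hc
          have hum := Finset.mem_Icc.mp hu
          exact hφu ▸ Finset.mem_image_of_mem φ (Finset.mem_Icc.mpr ⟨by omega, hum.2⟩)
      calc k + 1 ≤ ((Finset.Icc (v + 1) b).image φ).card + 1 := by omega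
      _ = (insert (φ v) ((Finset.Icc (v + 1) b).image φ)).card :=
          (Finset.card_insert_of_notMem hnot).symm
      _ ≤ ((Finset.Icc a b).image φ).card := Finset.card_le_card hsub

/-- For `n = 2^k - 1`, exactly `k` colors suffice and are necessary for a
conflict-free coloring of the discrete interval hypergraph `I_n`:
`f_{I_n}(1) = k`. -/
theorem stmt15 (k : ℕ) (hk : 1 ≤ k) (n : ℕ) (hn : n = 2 ^ k - 1) :
    (∃ φ : ℕ → ℕ, ((Finset.Icc 1 n).image φ).card ≤ k ∧ IsCFIntervals n φ) ∧
    (∀ φ : ℕ → ℕ, IsCFIntervals n φ → k ≤ ((Finset.Icc 1 n).image φ).card) := by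
  have h2k : 1 ≤ 2 ^ k := Nat.one_le_two_pow
  constructor
  · refine ⟨fun v => v.factorization 2, ?_, cf_val n⟩
    have hsub : (Finset.Icc 1 n).image (fun v => v.factorization 2)
        ⊆ Finset.range k := by
      intro c hc
      obtain ⟨v, hv, hφv⟩ := Finset.mem_image.mp hc
      have hvm := Finset.mem_Icc.mp hv
      have hvpos : 0 < v := hvm.1
      have hdvd : (2 : ℕ) ^ (v.factorization 2) ∣ v := Nat.ordProj_dvd v 2
      have hle : 2 ^ (v.factorization 2) ≤ v := Nat.le_of_dvd hvpos hdvd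
      have hlt : 2 ^ (v.factorization 2) < 2 ^ k := by omega
      have := (Nat.pow_lt_pow_iff_right (by norm_num : 1 < 2)).mp hlt
      simp only [Finset.mem_range, ← hφv]
      exact this
    calc ((Finset.Icc 1 n).image (fun v => v.factorization 2)).card
        ≤ (Finset.range k).card := Finset.card_le_card hsub
    _ = k := Finset.card_range k
  · intro φ hcf
    exact lower_bound n φ hcf k 1 n le_rfl le_rfl (by omega)
end
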